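/- arXiv:2509.05678 — 3 statements merged into one kernel-verified Lean document; each statement's English description precedes it below -/
import Mathlib

section
/- Under the permutation null distribution, for n ≥ 4 the variance of Z equals var(Z) = 4(n+1)(w₃ − w₁²/n)(S₃ − S₁²/n)/(n(n−1)(n−2)(n−3)) + 2(w₂ − w₁²/(n(n−1)))(S₂ − S₁²/(n(n−1)))/(n(n−3)) − 4(w₂ − w₁²/(n(n−1)))(S₃ − S₁²/n)/(n(n−2)(n−3)) − 4(w₃ − w₁²/n)(S₂ − S₁²/(n(n−1)))/(n(n−2)(n−3)). -/
open Finset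

/-- The WISE statistic computed on the permuted sequence:
`Z_π = Σ_i Σ_j w(|i−j|) S_{π(i)π(j)}`. -/
noncomputable def Zperm (n : ℕ) (w : ℕ → ℝ) (S : Fin n → Fin n → ℝ)
    (π : Equiv.Perm (Fin n)) : ℝ :=
  ∑ i : Fin n, ∑ j : Fin n, w (((i : ℕ) : ℤ) - ((j : ℕ) : ℤ)).natAbs * S (π i) (π j)

/-- Expectation under the uniform distribution on all `n!` permutations. -/
noncomputable def permMean (n : ℕ) (f : Equiv.Perm (Fin n) → ℝ) : ℝ :=
  (∑ π : Equiv.Perm (Fin n), f π) / (Nat.factorial n : ℝ)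

/-- Variance under the uniform distribution on all `n!` permutations. -/
noncomputable def permVar (n : ℕ) (f : Equiv.Perm (Fin n) → ℝ) : ℝ :=
  permMean n (fun π => (f π - permMean n f) ^ 2)

/-- `w₁ = Σ_{i≠j} w(|i−j|)`. -/
noncomputable def wOne (n : ℕ) (w : ℕ → ℝ) : ℝ :=
  ∑ i : Fin n, ∑ j : Fin n,
    if i = j then 0 else w (((i : ℕ) : ℤ) - ((j : ℕ) : ℤ)).natAbs

/-- `w₂ = Σ_{i≠j} w(|i−j|)²`. -/
noncomputable def wTwo (n : ℕ) (w : ℕ → ℝ) : ℝ :=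
  ∑ i : Fin n, ∑ j : Fin n,
    if i = j then 0 else (w (((i : ℕ) : ℤ) - ((j : ℕ) : ℤ)).natAbs) ^ 2

/-- `w₃ = Σ_i (Σ_{j≠i} w(|i−j|))²`. -/
noncomputable def wThree (n : ℕ) (w : ℕ → ℝ) : ℝ :=
  ∑ i : Fin n,
    (∑ j : Fin n, if j = i then 0 else w (((i : ℕ) : ℤ) - ((j : ℕ) : ℤ)).natAbs) ^ 2

/-- `S₁ = Σ_{a≠b} S_{ab}`. -/
noncomputable def SOne (n : ℕ) (S : Fin n → Fin n → ℝ) : ℝ :=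
  ∑ a : Fin n, ∑ b : Fin n, if a = b then 0 else S a b

/-- `S₂ = Σ_{a≠b} S_{ab}²`. -/
noncomputable def STwo (n : ℕ) (S : Fin n → Fin n → ℝ) : ℝ :=
  ∑ a : Fin n, ∑ b : Fin n, if a = b then 0 else (S a b) ^ 2

/-- `S₃ = Σ_a (Σ_{b≠a} S_{ab})²`. -/
noncomputable def SThree (n : ℕ) (S : Fin n → Fin n → ℝ) : ℝ :=
  ∑ a : Fin n, (∑ b : Fin n, if b = a then 0 else S a b) ^ 2

/-! ### Auxiliary lemmas -/

section Aux

open Function Equiv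

lemma exists_perm_extend {n k : ℕ} (v u : Fin k → Fin n) (hv : Injective v) (hu : Injective u) :
    ∃ π : Equiv.Perm (Fin n), ∀ m, π (v m) = u m := by
  classical
  have hcard : Fintype.card ↥((Set.range v)ᶜ) = Fintype.card ↥((Set.range u)ᶜ) := by
    rw [Fintype.card_compl_set, Fintype.card_compl_set,
      Set.card_range_of_injective hv, Set.card_range_of_injective hu]
  refine ⟨((Equiv.Set.sumCompl (Set.range v)).symm.trans
      ((Equiv.sumCongr ((Equiv.ofInjective v hv).symm.trans (Equiv.ofInjective u hu))
        (Fintype.equivOfCardEq hcard)).trans (Equiv.Set.sumCompl (Set.range u)))), ?_⟩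
  intro m
  have h1 : (Equiv.Set.sumCompl (Set.range v)).symm (v m)
      = Sum.inl ⟨v m, Set.mem_range_self m⟩ :=
    Equiv.Set.sumCompl_symm_apply_of_mem (Set.mem_range_self m)
  have h2 : (Equiv.ofInjective v hv).symm ⟨v m, Set.mem_range_self m⟩ = m := by
    apply (Equiv.ofInjective v hv).injective
    simp [Equiv.apply_symm_apply]
  simp [h1, h2, Equiv.Set.sumCompl_apply_inl, Equiv.ofInjective_apply]

lemma card_perm_fix {n k : ℕ} (v : Fin k → Fin n) (hv : Injective v) :
    (univ.filter (fun π : Equiv.Perm (Fin n) => ∀ m, π (v m) = v m)).card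
      = (n - k).factorial := by
  classical
  have h1 : (univ.filter (fun π : Equiv.Perm (Fin n) => ∀ m, π (v m) = v m)).card
      = Fintype.card {π : Equiv.Perm (Fin n) // ∀ m, π (v m) = v m} :=
    (Fintype.card_subtype _).symm
  have e1 : {π : Equiv.Perm (Fin n) // ∀ m, π (v m) = v m}
      ≃ {f : Equiv.Perm (Fin n) // ∀ a, ¬ (a ∈ (Set.range v)ᶜ) → f a = a} := by
    apply Equiv.subtypeEquivRight
    intro f
    constructor
    · intro h a ha
      obtain ⟨m, rfl⟩ := not_not.mp ha
      exact h m
    · intro h m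
      exact h (v m) (not_not_intro (Set.mem_range_self m))
  have e2 := (Equiv.Perm.subtypeEquivSubtypePerm (fun x : Fin n => x ∈ (Set.range v)ᶜ)).symm
  rw [h1, Fintype.card_congr (e1.trans e2), Fintype.card_perm, Fintype.card_compl_set,
    Set.card_range_of_injective hv, Fintype.card_fin, Fintype.card_fin]

lemma card_perm_fiber {n k : ℕ} (v u : Fin k → Fin n) (hv : Injective v) (hu : Injective u) :
    (univ.filter (fun π : Equiv.Perm (Fin n) => ∀ m, π (v m) = u m)).card
      = (n - k).factorial := by
  classical
  obtain ⟨π₀, hπ₀⟩ := exists_perm_extend v u hv hu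
  rw [← card_perm_fix v hv]
  apply Finset.card_bij' (fun σ _ => π₀⁻¹ * σ) (fun σ _ => π₀ * σ)
  · intro σ hσ
    simp only [mem_filter, mem_univ, true_and] at hσ ⊢
    intro m
    rw [Equiv.Perm.mul_apply, hσ m, ← hπ₀ m, Equiv.Perm.inv_def, Equiv.symm_apply_apply]
  · intro σ hσ
    simp only [mem_filter, mem_univ, true_and] at hσ ⊢
    intro m
    rw [Equiv.Perm.mul_apply, hσ m, hπ₀ m]
  · intro σ _; group
  · intro σ _; group

lemma inj2 {α} [DecidableEq α] {i j : α} (h : i ≠ j) : Function.Injective ![i, j] := by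
  intro x y hxy
  fin_cases x <;> fin_cases y <;> simp_all

lemma inj3 {α} [DecidableEq α] {i j k : α} (hij : i ≠ j) (hik : i ≠ k) (hjk : j ≠ k) :
    Function.Injective ![i, j, k] := by
  intro x y hxy
  fin_cases x <;> fin_cases y <;> simp_all

lemma inj4 {α} [DecidableEq α] {i j k l : α} (hij : i ≠ j) (hik : i ≠ k) (hil : i ≠ l)
    (hjk : j ≠ k) (hjl : j ≠ l) (hkl : k ≠ l) : Function.Injective ![i, j, k, l] := by
  intro x y hxy
  fin_cases x <;> fin_cases y <;> simp_all

lemma sum_perm_two {n : ℕ} {i j : Fin n} (hij : i ≠ j) (g : Fin n → Fin n → ℝ) :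
    ∑ π : Equiv.Perm (Fin n), g (π i) (π j)
      = (n - 2).factorial * ∑ a : Fin n, ∑ b : Fin n, if a = b then 0 else g a b := by
  classical
  have expand : ∀ π : Equiv.Perm (Fin n),
      g (π i) (π j) = ∑ a : Fin n, ∑ b : Fin n, if π i = a ∧ π j = b then g a b else 0 := by
    intro π; simp [ite_and, Finset.sum_ite_eq]
  simp_rw [expand]
  rw [Finset.sum_comm]
  rw [Finset.mul_sum]
  refine Finset.sum_congr rfl fun a _ => ?_
  rw [Finset.sum_comm, Finset.mul_sum]
  refine Finset.sum_congr rfl fun b _ => ?_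
  rw [← Finset.sum_filter, Finset.sum_const, nsmul_eq_mul]
  by_cases hab : a = b
  · subst hab
    have : (univ.filter (fun π : Equiv.Perm (Fin n) => π i = a ∧ π j = a)) = ∅ := by
      apply Finset.filter_false_of_mem
      rintro π - ⟨h1, h2⟩
      exact hij (π.injective (h1.trans h2.symm))
    simp [this]
  · have hfe : (univ.filter (fun π : Equiv.Perm (Fin n) => π i = a ∧ π j = b))
        = (univ.filter (fun π : Equiv.Perm (Fin n) => ∀ m, π (![i,j] m) = ![a,b] m)) := by
      ext π
      simp only [Finset.mem_filter, Finset.mem_univ, true_and]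
      constructor
      · rintro ⟨h1, h2⟩ m; fin_cases m <;> simpa
      · intro h; exact ⟨by simpa using h 0, by simpa using h 1⟩
    rw [hfe, card_perm_fiber _ _ (inj2 hij) (inj2 hab)]
    simp [hab]

lemma sum_perm_three {n : ℕ} {i j k : Fin n} (hij : i ≠ j) (hik : i ≠ k) (hjk : j ≠ k)
    (g : Fin n → Fin n → Fin n → ℝ) :
    ∑ π : Equiv.Perm (Fin n), g (π i) (π j) (π k)
      = (n - 3).factorial * ∑ a : Fin n, ∑ b : Fin n, ∑ c : Fin n,
          if a = b ∨ a = c ∨ b = c then 0 else g a b c := by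
  classical
  have expand : ∀ π : Equiv.Perm (Fin n),
      g (π i) (π j) (π k) = ∑ a : Fin n, ∑ b : Fin n, ∑ c : Fin n,
        if π i = a ∧ π j = b ∧ π k = c then g a b c else 0 := by
    intro π; simp [ite_and, Finset.sum_ite_eq]
  simp_rw [expand]
  rw [Finset.sum_comm, Finset.mul_sum]
  refine Finset.sum_congr rfl fun a _ => ?_
  rw [Finset.sum_comm, Finset.mul_sum]
  refine Finset.sum_congr rfl fun b _ => ?_
  rw [Finset.sum_comm, Finset.mul_sum]
  refine Finset.sum_congr rfl fun c _ => ?_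
  rw [← Finset.sum_filter, Finset.sum_const, nsmul_eq_mul]
  by_cases hg : a = b ∨ a = c ∨ b = c
  · have : (univ.filter (fun π : Equiv.Perm (Fin n) => π i = a ∧ π j = b ∧ π k = c)) = ∅ := by
      apply Finset.filter_false_of_mem
      rintro π - ⟨h1, h2, h3⟩
      rcases hg with h | h | h
      · exact hij (π.injective (h1.trans (h ▸ h2.symm)))
      · exact hik (π.injective (h1.trans (h ▸ h3.symm)))
      · exact hjk (π.injective (h2.trans (h ▸ h3.symm)))
    simp [this, hg]
  · push_neg at hg
    obtain ⟨hab, hac, hbc⟩ := hg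
    have hfe : (univ.filter (fun π : Equiv.Perm (Fin n) => π i = a ∧ π j = b ∧ π k = c))
        = (univ.filter (fun π : Equiv.Perm (Fin n) => ∀ m, π (![i,j,k] m) = ![a,b,c] m)) := by
      ext π
      simp only [Finset.mem_filter, Finset.mem_univ, true_and]
      constructor
      · rintro ⟨h1, h2, h3⟩ m; fin_cases m <;> simpa
      · intro h; exact ⟨by simpa using h 0, by simpa using h 1, by simpa using h 2⟩
    rw [hfe, card_perm_fiber _ _ (inj3 hij hik hjk) (inj3 hab hac hbc)]
    simp [hab, hac, hbc]

lemma sum_perm_four {n : ℕ} {i j k l : Fin n} (hij : i ≠ j) (hik : i ≠ k) (hil : i ≠ l)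
    (hjk : j ≠ k) (hjl : j ≠ l) (hkl : k ≠ l)
    (g : Fin n → Fin n → Fin n → Fin n → ℝ) :
    ∑ π : Equiv.Perm (Fin n), g (π i) (π j) (π k) (π l)
      = (n - 4).factorial * ∑ a : Fin n, ∑ b : Fin n, ∑ c : Fin n, ∑ d : Fin n,
          if a = b ∨ a = c ∨ a = d ∨ b = c ∨ b = d ∨ c = d then 0 else g a b c d := by
  classical
  have expand : ∀ π : Equiv.Perm (Fin n),
      g (π i) (π j) (π k) (π l) = ∑ a : Fin n, ∑ b : Fin n, ∑ c : Fin n, ∑ d : Fin n,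
        if π i = a ∧ π j = b ∧ π k = c ∧ π l = d then g a b c d else 0 := by
    intro π; simp [ite_and, Finset.sum_ite_eq]
  simp_rw [expand]
  rw [Finset.sum_comm, Finset.mul_sum]
  refine Finset.sum_congr rfl fun a _ => ?_
  rw [Finset.sum_comm, Finset.mul_sum]
  refine Finset.sum_congr rfl fun b _ => ?_
  rw [Finset.sum_comm, Finset.mul_sum]
  refine Finset.sum_congr rfl fun c _ => ?_
  rw [Finset.sum_comm, Finset.mul_sum]
  refine Finset.sum_congr rfl fun d _ => ?_
  rw [← Finset.sum_filter, Finset.sum_const, nsmul_eq_mul]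
  by_cases hg : a = b ∨ a = c ∨ a = d ∨ b = c ∨ b = d ∨ c = d
  · have : (univ.filter (fun π : Equiv.Perm (Fin n) =>
        π i = a ∧ π j = b ∧ π k = c ∧ π l = d)) = ∅ := by
      apply Finset.filter_false_of_mem
      rintro π - ⟨h1, h2, h3, h4⟩
      rcases hg with h | h | h | h | h | h
      · exact hij (π.injective (h1.trans (h ▸ h2.symm)))
      · exact hik (π.injective (h1.trans (h ▸ h3.symm)))
      · exact hil (π.injective (h1.trans (h ▸ h4.symm)))
      · exact hjk (π.injective (h2.trans (h ▸ h3.symm)))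
      · exact hjl (π.injective (h2.trans (h ▸ h4.symm)))
      · exact hkl (π.injective (h3.trans (h ▸ h4.symm)))
    simp [this, hg]
  · push_neg at hg
    obtain ⟨hab, hac, had, hbc, hbd, hcd⟩ := hg
    have hfe : (univ.filter (fun π : Equiv.Perm (Fin n) =>
        π i = a ∧ π j = b ∧ π k = c ∧ π l = d))
        = (univ.filter (fun π : Equiv.Perm (Fin n) => ∀ m, π (![i,j,k,l] m) = ![a,b,c,d] m)) := by
      ext π
      simp only [Finset.mem_filter, Finset.mem_univ, true_and]
      constructor
      · rintro ⟨h1, h2, h3, h4⟩ m; fin_cases m <;> simpa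
      · intro h
        exact ⟨by simpa using h 0, by simpa using h 1, by simpa using h 2, by simpa using h 3⟩
    rw [hfe, card_perm_fiber _ _ (inj4 hij hik hil hjk hjl hkl) (inj4 hab hac had hbc hbd hcd)]
    simp [hab, hac, had, hbc, hbd, hcd]

variable {n : ℕ}

lemma sum4_base (V : Fin n → Fin n → ℝ) :
    ∑ i : Fin n, ∑ j : Fin n, ∑ k : Fin n, ∑ l : Fin n, V i j * V k l
      = (∑ i : Fin n, ∑ j : Fin n, V i j) ^ 2 := by
  simp_rw [← Finset.mul_sum, ← Finset.sum_mul, sq]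

lemma sum4_ik (V : Fin n → Fin n → ℝ) :
    ∑ i : Fin n, ∑ j : Fin n, ∑ k : Fin n, ∑ l : Fin n,
      (if i = k then V i j * V k l else 0)
      = ∑ i : Fin n, (∑ j : Fin n, V i j) ^ 2 := by
  have h1 : ∀ i j : Fin n, ∑ k : Fin n, ∑ l : Fin n, (if i = k then V i j * V k l else 0)
      = ∑ l : Fin n, V i j * V i l := by
    intro i j
    rw [Finset.sum_comm]
    refine Finset.sum_congr rfl fun l _ => ?_
    rw [Finset.sum_ite_eq]
    simp
  simp_rw [h1, ← Finset.mul_sum, ← Finset.sum_mul, sq]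

lemma sum4_il (V : Fin n → Fin n → ℝ) (hsym : ∀ i j, V i j = V j i) :
    ∑ i : Fin n, ∑ j : Fin n, ∑ k : Fin n, ∑ l : Fin n,
      (if i = l then V i j * V k l else 0)
      = ∑ i : Fin n, (∑ j : Fin n, V i j) ^ 2 := by
  have h1 : ∀ i j k : Fin n, ∑ l : Fin n, (if i = l then V i j * V k l else 0)
      = V i j * V i k := by
    intro i j k
    rw [Finset.sum_ite_eq]
    simp [hsym k i]
  simp_rw [h1, ← Finset.mul_sum, ← Finset.sum_mul, sq]

lemma sum4_jk (V : Fin n → Fin n → ℝ) (hsym : ∀ i j, V i j = V j i) :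
    ∑ i : Fin n, ∑ j : Fin n, ∑ k : Fin n, ∑ l : Fin n,
      (if j = k then V i j * V k l else 0)
      = ∑ i : Fin n, (∑ j : Fin n, V i j) ^ 2 := by
  have h1 : ∀ i j : Fin n, ∑ k : Fin n, ∑ l : Fin n, (if j = k then V i j * V k l else 0)
      = ∑ l : Fin n, V j i * V j l := by
    intro i j
    rw [Finset.sum_comm]
    refine Finset.sum_congr rfl fun l _ => ?_
    rw [Finset.sum_ite_eq]
    simp [hsym i j]
  simp_rw [h1]
  rw [Finset.sum_comm]
  simp_rw [← Finset.mul_sum, ← Finset.sum_mul, sq]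

lemma sum4_jl (V : Fin n → Fin n → ℝ) (hsym : ∀ i j, V i j = V j i) :
    ∑ i : Fin n, ∑ j : Fin n, ∑ k : Fin n, ∑ l : Fin n,
      (if j = l then V i j * V k l else 0)
      = ∑ i : Fin n, (∑ j : Fin n, V i j) ^ 2 := by
  have h1 : ∀ i j k : Fin n, ∑ l : Fin n, (if j = l then V i j * V k l else 0)
      = V j i * V j k := by
    intro i j k
    rw [Finset.sum_ite_eq]
    simp [hsym i j, hsym k j]
  simp_rw [h1]
  rw [Finset.sum_comm]
  simp_rw [← Finset.mul_sum, ← Finset.sum_mul, sq]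

lemma sum4_ikjl (V : Fin n → Fin n → ℝ) :
    ∑ i : Fin n, ∑ j : Fin n, ∑ k : Fin n, ∑ l : Fin n,
      (if i = k ∧ j = l then V i j * V k l else 0)
      = ∑ i : Fin n, ∑ j : Fin n, (V i j) ^ 2 := by
  have h1 : ∀ i j k : Fin n, ∑ l : Fin n, (if i = k ∧ j = l then V i j * V k l else 0)
      = if i = k then V i j * V k j else 0 := by
    intro i j k
    by_cases hik : i = k
    · simp [hik, Finset.sum_ite_eq]
    · simp [hik]
  simp_rw [h1]
  have h2 : ∀ i j : Fin n, ∑ k : Fin n, (if i = k then V i j * V k j else 0)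
      = V i j * V i j := by
    intro i j
    rw [Finset.sum_ite_eq]
    simp
  simp_rw [h2, sq]

lemma sum4_iljk (V : Fin n → Fin n → ℝ) (hsym : ∀ i j, V i j = V j i) :
    ∑ i : Fin n, ∑ j : Fin n, ∑ k : Fin n, ∑ l : Fin n,
      (if i = l ∧ j = k then V i j * V k l else 0)
      = ∑ i : Fin n, ∑ j : Fin n, (V i j) ^ 2 := by
  have h1 : ∀ i j k : Fin n, ∑ l : Fin n, (if i = l ∧ j = k then V i j * V k l else 0)
      = if j = k then V i j * V k i else 0 := by
    intro i j k
    by_cases hjk : j = k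
    · simp [hjk, Finset.sum_ite_eq]
    · simp [hjk]
  simp_rw [h1]
  have h2 : ∀ i j : Fin n, ∑ k : Fin n, (if j = k then V i j * V k i else 0)
      = V i j * V i j := by
    intro i j
    rw [Finset.sum_ite_eq]
    simp [hsym j i]
  simp_rw [h2, sq]

lemma conv3 (S : Fin n → Fin n → ℝ) :
    ∑ a : Fin n, (∑ b : Fin n, if a = b then 0 else S a b) ^ 2 = SThree n S := by
  unfold SThree
  refine Finset.sum_congr rfl fun a _ => ?_
  congr 1
  exact Finset.sum_congr rfl fun b _ => if_congr eq_comm rfl rfl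

lemma conv2 (S : Fin n → Fin n → ℝ) : ∑ a : Fin n, ∑ b : Fin n,
    ((if a = b then 0 else S a b)) ^ 2 = STwo n S := by
  unfold STwo
  refine Finset.sum_congr rfl fun a _ => Finset.sum_congr rfl fun b _ => ?_
  by_cases h : a = b <;> simp [h]

lemma tri_eq (S : Fin n → Fin n → ℝ) : ∑ a : Fin n, ∑ b : Fin n, ∑ c : Fin n,
      (if a = b ∨ a = c ∨ b = c then 0 else S a b * S a c)
    = SThree n S - STwo n S := by
  have point : ∀ a b c : Fin n,
      (if a = b ∨ a = c ∨ b = c then 0 else S a b * S a c)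
      = (if a = b then 0 else S a b) * (if a = c then 0 else S a c)
        - (if b = c then (if a = b then 0 else S a b) * (if a = c then 0 else S a c) else 0) := by
    intro a b c
    by_cases h1 : a = b <;> by_cases h2 : a = c <;> by_cases h3 : b = c <;>
      simp_all
  simp_rw [point, Finset.sum_sub_distrib]
  have h1 : ∀ a : Fin n, ∑ b : Fin n, ∑ c : Fin n,
      (if a = b then 0 else S a b) * (if a = c then 0 else S a c)
      = (∑ b : Fin n, if a = b then 0 else S a b) ^ 2 := by
    intro a
    simp_rw [← Finset.mul_sum, ← Finset.sum_mul, sq]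
  have h2 : ∀ a : Fin n, ∑ b : Fin n, ∑ c : Fin n,
      (if b = c then (if a = b then 0 else S a b) * (if a = c then 0 else S a c) else 0)
      = ∑ b : Fin n, ((if a = b then 0 else S a b)) ^ 2 := by
    intro a
    refine Finset.sum_congr rfl fun b _ => ?_
    rw [Finset.sum_ite_eq]
    by_cases h : a = b <;> simp [h, sq]
  simp_rw [h1, h2]
  rw [conv3 S, conv2 S]

lemma quad_eq (S : Fin n → Fin n → ℝ) (hS : ∀ a b, S a b = S b a) :
    ∑ a : Fin n, ∑ b : Fin n, ∑ c : Fin n, ∑ d : Fin n,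
      (if a = b ∨ a = c ∨ a = d ∨ b = c ∨ b = d ∨ c = d then 0 else S a b * S c d)
    = (SOne n S) ^ 2 - 4 * SThree n S + 2 * STwo n S := by
  have Dsym : ∀ a b : Fin n, (if a = b then 0 else S a b) = (if b = a then 0 else S b a) := by
    intro a b
    rw [hS a b]
    exact if_congr eq_comm rfl rfl
  have point : ∀ a b c d : Fin n,
      (if a = b ∨ a = c ∨ a = d ∨ b = c ∨ b = d ∨ c = d then 0 else S a b * S c d)
      = (if a = b then 0 else S a b) * (if c = d then 0 else S c d)
        - (if a = c then (if a = b then 0 else S a b) * (if c = d then 0 else S c d) else 0)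
        - (if a = d then (if a = b then 0 else S a b) * (if c = d then 0 else S c d) else 0)
        - (if b = c then (if a = b then 0 else S a b) * (if c = d then 0 else S c d) else 0)
        - (if b = d then (if a = b then 0 else S a b) * (if c = d then 0 else S c d) else 0)
        + (if a = c ∧ b = d then (if a = b then 0 else S a b) * (if c = d then 0 else S c d) else 0)
        + (if a = d ∧ b = c then (if a = b then 0 else S a b) * (if c = d then 0 else S c d) else 0) := by
    intro a b c d
    by_cases h1 : a = b <;> by_cases h2 : c = d <;> by_cases h3 : a = c <;>
      by_cases h4 : a = d <;> by_cases h5 : b = c <;> by_cases h6 : b = d <;>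
      (try simp_all) <;> (try ring)
  rw [show (∑ a : Fin n, ∑ b : Fin n, ∑ c : Fin n, ∑ d : Fin n,
      (if a = b ∨ a = c ∨ a = d ∨ b = c ∨ b = d ∨ c = d then 0 else S a b * S c d))
      = ∑ a : Fin n, ∑ b : Fin n, ∑ c : Fin n, ∑ d : Fin n,
        ((if a = b then 0 else S a b) * (if c = d then 0 else S c d)
        - (if a = c then (if a = b then 0 else S a b) * (if c = d then 0 else S c d) else 0)
        - (if a = d then (if a = b then 0 else S a b) * (if c = d then 0 else S c d) else 0)
        - (if b = c then (if a = b then 0 else S a b) * (if c = d then 0 else S c d) else 0)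
        - (if b = d then (if a = b then 0 else S a b) * (if c = d then 0 else S c d) else 0)
        + (if a = c ∧ b = d then (if a = b then 0 else S a b) * (if c = d then 0 else S c d) else 0)
        + (if a = d ∧ b = c then (if a = b then 0 else S a b) * (if c = d then 0 else S c d) else 0)) from
    Finset.sum_congr rfl fun a _ => Finset.sum_congr rfl fun b _ =>
      Finset.sum_congr rfl fun c _ => Finset.sum_congr rfl fun d _ => point a b c d]
  simp only [Finset.sum_sub_distrib, Finset.sum_add_distrib]
  rw [sum4_base (fun a b => if a = b then 0 else S a b),
    sum4_ik (fun a b => if a = b then 0 else S a b),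
    sum4_il (fun a b => if a = b then 0 else S a b) Dsym,
    sum4_jk (fun a b => if a = b then 0 else S a b) Dsym,
    sum4_jl (fun a b => if a = b then 0 else S a b) Dsym,
    sum4_ikjl (fun a b => if a = b then 0 else S a b),
    sum4_iljk (fun a b => if a = b then 0 else S a b) Dsym,
    conv3 S, conv2 S]
  unfold SOne
  ring

lemma triBA (S : Fin n → Fin n → ℝ) : ∑ a : Fin n, ∑ b : Fin n, ∑ c : Fin n,
      (if a = b ∨ a = c ∨ b = c then 0 else S b a * S b c)
    = SThree n S - STwo n S := by
  rw [← tri_eq S, Finset.sum_comm]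
  refine Finset.sum_congr rfl fun b _ => Finset.sum_congr rfl fun a _ =>
    Finset.sum_congr rfl fun c _ => ?_
  refine if_congr ?_ rfl rfl
  constructor <;> rintro (rfl | rfl | h) <;> tauto

lemma Ppair1 (S : Fin n → Fin n → ℝ) {i j : Fin n} (hij : i ≠ j) :
    ∑ π : Equiv.Perm (Fin n), S (π i) (π j) * S (π i) (π j)
      = (n - 2).factorial * STwo n S := by
  rw [sum_perm_two hij (fun a b => S a b * S a b)]
  congr 1
  refine Finset.sum_congr rfl fun a _ => Finset.sum_congr rfl fun b _ => ?_
  by_cases h : a = b <;> simp [h, sq]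

lemma Ppair2 (S : Fin n → Fin n → ℝ) (hS : ∀ a b, S a b = S b a) {i j : Fin n} (hij : i ≠ j) :
    ∑ π : Equiv.Perm (Fin n), S (π i) (π j) * S (π j) (π i)
      = (n - 2).factorial * STwo n S := by
  rw [sum_perm_two hij (fun a b => S a b * S b a)]
  congr 1
  refine Finset.sum_congr rfl fun a _ => Finset.sum_congr rfl fun b _ => ?_
  by_cases h : a = b <;> simp [h, sq, hS b a]

lemma Ptri_ik (S : Fin n → Fin n → ℝ) {i j l : Fin n} (hij : i ≠ j) (hil : i ≠ l) (hjl : j ≠ l) :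
    ∑ π : Equiv.Perm (Fin n), S (π i) (π j) * S (π i) (π l)
      = (n - 3).factorial * (SThree n S - STwo n S) := by
  rw [sum_perm_three hij hil hjl (fun a b c => S a b * S a c), tri_eq S]

lemma Ptri_il (S : Fin n → Fin n → ℝ) (hS : ∀ a b, S a b = S b a) {i j k : Fin n} (hij : i ≠ j)
    (hik : i ≠ k) (hjk : j ≠ k) :
    ∑ π : Equiv.Perm (Fin n), S (π i) (π j) * S (π k) (π i)
      = (n - 3).factorial * (SThree n S - STwo n S) := by
  rw [sum_perm_three hij hik hjk (fun a b c => S a b * S c a)]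
  rw [show (∑ a : Fin n, ∑ b : Fin n, ∑ c : Fin n,
      (if a = b ∨ a = c ∨ b = c then 0 else S a b * S c a))
    = ∑ a : Fin n, ∑ b : Fin n, ∑ c : Fin n,
      (if a = b ∨ a = c ∨ b = c then 0 else S a b * S a c) from
    Finset.sum_congr rfl fun a _ => Finset.sum_congr rfl fun b _ =>
      Finset.sum_congr rfl fun c _ => by rw [hS c a]]
  rw [tri_eq S]

lemma Ptri_jk (S : Fin n → Fin n → ℝ) (hS : ∀ a b, S a b = S b a) {i j l : Fin n} (hij : i ≠ j)
    (hil : i ≠ l) (hjl : j ≠ l) :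
    ∑ π : Equiv.Perm (Fin n), S (π i) (π j) * S (π j) (π l)
      = (n - 3).factorial * (SThree n S - STwo n S) := by
  rw [sum_perm_three hij hil hjl (fun a b c => S a b * S b c)]
  rw [show (∑ a : Fin n, ∑ b : Fin n, ∑ c : Fin n,
      (if a = b ∨ a = c ∨ b = c then 0 else S a b * S b c))
    = ∑ a : Fin n, ∑ b : Fin n, ∑ c : Fin n,
      (if a = b ∨ a = c ∨ b = c then 0 else S b a * S b c) from
    Finset.sum_congr rfl fun a _ => Finset.sum_congr rfl fun b _ =>
      Finset.sum_congr rfl fun c _ => by rw [hS a b]]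
  rw [triBA S]

lemma Ptri_jl (S : Fin n → Fin n → ℝ) (hS : ∀ a b, S a b = S b a) {i j k : Fin n} (hij : i ≠ j)
    (hik : i ≠ k) (hjk : j ≠ k) :
    ∑ π : Equiv.Perm (Fin n), S (π i) (π j) * S (π k) (π j)
      = (n - 3).factorial * (SThree n S - STwo n S) := by
  rw [sum_perm_three hij hik hjk (fun a b c => S a b * S c b)]
  rw [show (∑ a : Fin n, ∑ b : Fin n, ∑ c : Fin n,
      (if a = b ∨ a = c ∨ b = c then 0 else S a b * S c b))
    = ∑ a : Fin n, ∑ b : Fin n, ∑ c : Fin n,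
      (if a = b ∨ a = c ∨ b = c then 0 else S b a * S b c) from
    Finset.sum_congr rfl fun a _ => Finset.sum_congr rfl fun b _ =>
      Finset.sum_congr rfl fun c _ => by rw [hS a b, hS c b]]
  rw [triBA S]

lemma Pquad (S : Fin n → Fin n → ℝ) (hS : ∀ a b, S a b = S b a) {i j k l : Fin n} (hij : i ≠ j)
    (hik : i ≠ k) (hil : i ≠ l) (hjk : j ≠ k) (hjl : j ≠ l) (hkl : k ≠ l) :
    ∑ π : Equiv.Perm (Fin n), S (π i) (π j) * S (π k) (π l)
      = (n - 4).factorial * ((SOne n S) ^ 2 - 4 * SThree n S + 2 * STwo n S) := by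
  rw [sum_perm_four hij hik hil hjk hjl hkl (fun a b c d => S a b * S c d), quad_eq S hS]

lemma mul_sum4 (c : ℝ) (F : Fin n → Fin n → Fin n → Fin n → ℝ) :
    ∑ i : Fin n, ∑ j : Fin n, ∑ k : Fin n, ∑ l : Fin n, c * F i j k l
      = c * ∑ i : Fin n, ∑ j : Fin n, ∑ k : Fin n, ∑ l : Fin n, F i j k l := by
  simp_rw [Finset.mul_sum]

lemma key_point (V : Fin n → Fin n → ℝ) (hVd : ∀ i, V i i = 0)
    (S : Fin n → Fin n → ℝ) (hS : ∀ a b, S a b = S b a) (i j k l : Fin n) :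
    (V i j * V k l) * (∑ π : Equiv.Perm (Fin n), S (π i) (π j) * S (π k) (π l))
    = ((n - 4).factorial * ((SOne n S) ^ 2 - 4 * SThree n S + 2 * STwo n S)) * (V i j * V k l)
      + ((n - 3).factorial * (SThree n S - STwo n S)
          - (n - 4).factorial * ((SOne n S) ^ 2 - 4 * SThree n S + 2 * STwo n S))
        * (if i = k then V i j * V k l else 0)
      + ((n - 3).factorial * (SThree n S - STwo n S)
          - (n - 4).factorial * ((SOne n S) ^ 2 - 4 * SThree n S + 2 * STwo n S))
        * (if i = l then V i j * V k l else 0)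
      + ((n - 3).factorial * (SThree n S - STwo n S)
          - (n - 4).factorial * ((SOne n S) ^ 2 - 4 * SThree n S + 2 * STwo n S))
        * (if j = k then V i j * V k l else 0)
      + ((n - 3).factorial * (SThree n S - STwo n S)
          - (n - 4).factorial * ((SOne n S) ^ 2 - 4 * SThree n S + 2 * STwo n S))
        * (if j = l then V i j * V k l else 0)
      + ((n - 2).factorial * STwo n S - 2 * ((n - 3).factorial * (SThree n S - STwo n S))
          + (n - 4).factorial * ((SOne n S) ^ 2 - 4 * SThree n S + 2 * STwo n S))
        * (if i = k ∧ j = l then V i j * V k l else 0)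
      + ((n - 2).factorial * STwo n S - 2 * ((n - 3).factorial * (SThree n S - STwo n S))
          + (n - 4).factorial * ((SOne n S) ^ 2 - 4 * SThree n S + 2 * STwo n S))
        * (if i = l ∧ j = k then V i j * V k l else 0) := by
  by_cases hij : i = j
  · subst hij
    simp [hVd i]
  by_cases hkl : k = l
  · subst hkl
    simp [hVd k]
  by_cases hik : i = k
  · subst hik
    by_cases hjl : j = l
    · subst hjl
      rw [Ppair1 S hij]
      simp [hij, Ne.symm hij]
      ring
    · rw [Ptri_ik S hij hkl hjl]
      simp [hij, Ne.symm hij, hkl, hjl]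
      ring
  · by_cases hil : i = l
    · subst hil
      by_cases hjk : j = k
      · subst hjk
        rw [Ppair2 S hS hij]
        simp [hij, Ne.symm hij, hik]
        ring
      · rw [Ptri_il S hS hij hik hjk]
        simp [hij, Ne.symm hij, hik, hjk]
        ring
    · by_cases hjk : j = k
      · subst hjk
        rw [Ptri_jk S hS hij hil hkl]
        simp [hij, Ne.symm hij, hil, hkl]
        ring
      · by_cases hjl : j = l
        · subst hjl
          rw [Ptri_jl S hS hij hik hjk]
          simp [hij, Ne.symm hij, hik, hjk]
          ring
        · rw [Pquad S hS hij hik hil hjk hjl hkl]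
          simp [hik, hil, hjk, hjl]
          ring

lemma E1_eq (V : Fin n → Fin n → ℝ) (hVd : ∀ i, V i i = 0) (S : Fin n → Fin n → ℝ) :
    ∑ π : Equiv.Perm (Fin n), (∑ i : Fin n, ∑ j : Fin n, V i j * S (π i) (π j))
      = (n - 2).factorial * ((∑ i : Fin n, ∑ j : Fin n, V i j) * SOne n S) := by
  classical
  have key : ∀ i j : Fin n, ∑ π : Equiv.Perm (Fin n), V i j * S (π i) (π j)
      = V i j * ((n - 2).factorial * SOne n S) := by
    intro i j
    by_cases hij : i = j
    · subst hij
      simp [hVd i]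
    · rw [← Finset.mul_sum, sum_perm_two hij S]
      rfl
  rw [Finset.sum_comm]
  have h1 : ∀ i : Fin n, ∑ π : Equiv.Perm (Fin n), ∑ j : Fin n, V i j * S (π i) (π j)
      = ∑ j : Fin n, V i j * ((n - 2).factorial * SOne n S) := by
    intro i
    rw [Finset.sum_comm]
    exact Finset.sum_congr rfl fun j _ => key i j
  calc ∑ i : Fin n, ∑ π : Equiv.Perm (Fin n), ∑ j : Fin n, V i j * S (π i) (π j)
      = ∑ i : Fin n, ∑ j : Fin n, V i j * ((n - 2).factorial * SOne n S) :=
        Finset.sum_congr rfl fun i _ => h1 i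
    _ = _ := by
        simp_rw [← Finset.sum_mul]
        ring

lemma E2_eq (V : Fin n → Fin n → ℝ) (hVd : ∀ i, V i i = 0) (hVs : ∀ i j, V i j = V j i)
    (S : Fin n → Fin n → ℝ) (hS : ∀ a b, S a b = S b a) :
    ∑ π : Equiv.Perm (Fin n), (∑ i : Fin n, ∑ j : Fin n, V i j * S (π i) (π j)) ^ 2
      = ((n - 4).factorial * ((SOne n S) ^ 2 - 4 * SThree n S + 2 * STwo n S))
          * (∑ i : Fin n, ∑ j : Fin n, V i j) ^ 2
        + 4 * ((n - 3).factorial * (SThree n S - STwo n S)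
            - (n - 4).factorial * ((SOne n S) ^ 2 - 4 * SThree n S + 2 * STwo n S))
          * (∑ i : Fin n, (∑ j : Fin n, V i j) ^ 2)
        + 2 * ((n - 2).factorial * STwo n S - 2 * ((n - 3).factorial * (SThree n S - STwo n S))
            + (n - 4).factorial * ((SOne n S) ^ 2 - 4 * SThree n S + 2 * STwo n S))
          * (∑ i : Fin n, ∑ j : Fin n, (V i j) ^ 2) := by
  classical
  have expand : ∀ π : Equiv.Perm (Fin n),
      (∑ i : Fin n, ∑ j : Fin n, V i j * S (π i) (π j)) ^ 2
      = ∑ i : Fin n, ∑ j : Fin n, ∑ k : Fin n, ∑ l : Fin n,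
          (V i j * S (π i) (π j)) * (V k l * S (π k) (π l)) :=
    fun π => (sum4_base (fun i j => V i j * S (π i) (π j))).symm
  rw [show (∑ π : Equiv.Perm (Fin n), (∑ i : Fin n, ∑ j : Fin n, V i j * S (π i) (π j)) ^ 2)
      = ∑ π : Equiv.Perm (Fin n), ∑ i : Fin n, ∑ j : Fin n, ∑ k : Fin n, ∑ l : Fin n,
          (V i j * S (π i) (π j)) * (V k l * S (π k) (π l)) from
    Finset.sum_congr rfl fun π _ => expand π]
  rw [Finset.sum_comm]
  have swap1 : ∀ i : Fin n,
      (∑ π : Equiv.Perm (Fin n), ∑ j : Fin n, ∑ k : Fin n, ∑ l : Fin n,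
        (V i j * S (π i) (π j)) * (V k l * S (π k) (π l)))
      = ∑ j : Fin n, ∑ k : Fin n, ∑ l : Fin n,
          (V i j * V k l) * (∑ π : Equiv.Perm (Fin n), S (π i) (π j) * S (π k) (π l)) := by
    intro i
    rw [Finset.sum_comm]
    refine Finset.sum_congr rfl fun j _ => ?_
    rw [Finset.sum_comm]
    refine Finset.sum_congr rfl fun k _ => ?_
    rw [Finset.sum_comm]
    refine Finset.sum_congr rfl fun l _ => ?_
    rw [show (∑ π : Equiv.Perm (Fin n), (V i j * S (π i) (π j)) * (V k l * S (π k) (π l)))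
        = ∑ π : Equiv.Perm (Fin n), (V i j * V k l) * (S (π i) (π j) * S (π k) (π l)) from
      Finset.sum_congr rfl fun π _ => by ring, ← Finset.mul_sum]
  calc ∑ i : Fin n, ∑ π : Equiv.Perm (Fin n), ∑ j : Fin n, ∑ k : Fin n, ∑ l : Fin n,
        (V i j * S (π i) (π j)) * (V k l * S (π k) (π l))
      = ∑ i : Fin n, ∑ j : Fin n, ∑ k : Fin n, ∑ l : Fin n,
          (V i j * V k l) * (∑ π : Equiv.Perm (Fin n), S (π i) (π j) * S (π k) (π l)) :=
        Finset.sum_congr rfl fun i _ => swap1 i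
    _ = _ := by
        rw [show (∑ i : Fin n, ∑ j : Fin n, ∑ k : Fin n, ∑ l : Fin n,
            (V i j * V k l) * (∑ π : Equiv.Perm (Fin n), S (π i) (π j) * S (π k) (π l)))
          = ∑ i : Fin n, ∑ j : Fin n, ∑ k : Fin n, ∑ l : Fin n,
            (((n - 4).factorial * ((SOne n S) ^ 2 - 4 * SThree n S + 2 * STwo n S))
                * (V i j * V k l)
              + ((n - 3).factorial * (SThree n S - STwo n S)
                  - (n - 4).factorial * ((SOne n S) ^ 2 - 4 * SThree n S + 2 * STwo n S))
                * (if i = k then V i j * V k l else 0)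
              + ((n - 3).factorial * (SThree n S - STwo n S)
                  - (n - 4).factorial * ((SOne n S) ^ 2 - 4 * SThree n S + 2 * STwo n S))
                * (if i = l then V i j * V k l else 0)
              + ((n - 3).factorial * (SThree n S - STwo n S)
                  - (n - 4).factorial * ((SOne n S) ^ 2 - 4 * SThree n S + 2 * STwo n S))
                * (if j = k then V i j * V k l else 0)
              + ((n - 3).factorial * (SThree n S - STwo n S)
                  - (n - 4).factorial * ((SOne n S) ^ 2 - 4 * SThree n S + 2 * STwo n S))
                * (if j = l then V i j * V k l else 0)
              + ((n - 2).factorial * STwo n S - 2 * ((n - 3).factorial * (SThree n S - STwo n S))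
                  + (n - 4).factorial * ((SOne n S) ^ 2 - 4 * SThree n S + 2 * STwo n S))
                * (if i = k ∧ j = l then V i j * V k l else 0)
              + ((n - 2).factorial * STwo n S - 2 * ((n - 3).factorial * (SThree n S - STwo n S))
                  + (n - 4).factorial * ((SOne n S) ^ 2 - 4 * SThree n S + 2 * STwo n S))
                * (if i = l ∧ j = k then V i j * V k l else 0)) from
          Finset.sum_congr rfl fun i _ => Finset.sum_congr rfl fun j _ =>
            Finset.sum_congr rfl fun k _ => Finset.sum_congr rfl fun l _ =>
              key_point V hVd S hS i j k l]
        simp only [Finset.sum_add_distrib]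
        rw [mul_sum4 _ (fun i j k l => V i j * V k l),
          mul_sum4 _ (fun i j k l => if i = k then V i j * V k l else 0),
          mul_sum4 _ (fun i j k l => if i = l then V i j * V k l else 0),
          mul_sum4 _ (fun i j k l => if j = k then V i j * V k l else 0),
          mul_sum4 _ (fun i j k l => if j = l then V i j * V k l else 0),
          mul_sum4 _ (fun i j k l => if i = k ∧ j = l then V i j * V k l else 0),
          mul_sum4 _ (fun i j k l => if i = l ∧ j = k then V i j * V k l else 0)]
        rw [sum4_base V, sum4_ik V, sum4_il V hVs, sum4_jk V hVs, sum4_jl V hVs,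
          sum4_ikjl V, sum4_iljk V hVs]
        ring

lemma permVar_eq (f : Equiv.Perm (Fin n) → ℝ) :
    permVar n f = (∑ π : Equiv.Perm (Fin n), (f π) ^ 2) / n.factorial
      - ((∑ π : Equiv.Perm (Fin n), f π) / n.factorial) ^ 2 := by
  have hN : (n.factorial : ℝ) ≠ 0 := Nat.cast_ne_zero.mpr n.factorial_ne_zero
  have hcard : ((Finset.univ : Finset (Equiv.Perm (Fin n))).card : ℝ) = n.factorial := by
    rw [Finset.card_univ, Fintype.card_perm, Fintype.card_fin]
  unfold permVar permMean
  set T := ∑ π : Equiv.Perm (Fin n), f π with hT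
  have expand : ∑ π : Equiv.Perm (Fin n), (f π - T / n.factorial) ^ 2
      = (∑ π : Equiv.Perm (Fin n), (f π) ^ 2) - 2 * (T / n.factorial) * T
        + ((Finset.univ : Finset (Equiv.Perm (Fin n))).card : ℝ) * (T / n.factorial) ^ 2 := by
    rw [show (∑ π : Equiv.Perm (Fin n), (f π - T / n.factorial) ^ 2)
        = ∑ π : Equiv.Perm (Fin n),
          ((f π) ^ 2 - (2 * (T / n.factorial)) * f π + (T / n.factorial) ^ 2) from
      Finset.sum_congr rfl fun π _ => by ring]
    rw [Finset.sum_add_distrib, Finset.sum_sub_distrib, ← Finset.mul_sum, ← hT,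
      Finset.sum_const, nsmul_eq_mul]
  rw [expand, hcard]
  field_simp
  ring
end Aux

set_option maxHeartbeats 1600000 in
/-- Under the permutation null distribution, for `n ≥ 4`,
`var(Z)` has the stated closed form. -/
theorem permutation_null_variance (n : ℕ) (hn : 4 ≤ n)
    (w : ℕ → ℝ) (hw : w 0 = 0)
    (S : Fin n → Fin n → ℝ) (hS : ∀ a b, S a b = S b a) :
    permVar n (Zperm n w S) =
      4 * ((n : ℝ) + 1) * (wThree n w - (wOne n w) ^ 2 / n)
          * (SThree n S - (SOne n S) ^ 2 / n)
        / ((n : ℝ) * ((n : ℝ) - 1) * ((n : ℝ) - 2) * ((n : ℝ) - 3))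
      + 2 * (wTwo n w - (wOne n w) ^ 2 / ((n : ℝ) * ((n : ℝ) - 1)))
          * (STwo n S - (SOne n S) ^ 2 / ((n : ℝ) * ((n : ℝ) - 1)))
        / ((n : ℝ) * ((n : ℝ) - 3))
      - 4 * (wTwo n w - (wOne n w) ^ 2 / ((n : ℝ) * ((n : ℝ) - 1)))
          * (SThree n S - (SOne n S) ^ 2 / n)
        / ((n : ℝ) * ((n : ℝ) - 2) * ((n : ℝ) - 3))
      - 4 * (wThree n w - (wOne n w) ^ 2 / n)
          * (STwo n S - (SOne n S) ^ 2 / ((n : ℝ) * ((n : ℝ) - 1)))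
        / ((n : ℝ) * ((n : ℝ) - 2) * ((n : ℝ) - 3)) := by
  classical
  set V : Fin n → Fin n → ℝ :=
    fun i j => w (((i : ℕ) : ℤ) - ((j : ℕ) : ℤ)).natAbs with hV
  have hVd : ∀ i : Fin n, V i i = 0 := by
    intro i
    simp [hV, hw]
  have hVs : ∀ i j : Fin n, V i j = V j i := by
    intro i j
    simp only [hV]
    rw [← Int.natAbs_neg, neg_sub]
  have hZ : ∀ π : Equiv.Perm (Fin n),
      Zperm n w S π = ∑ i : Fin n, ∑ j : Fin n, V i j * S (π i) (π j) := fun π => rfl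
  have hw1 : wOne n w = ∑ i : Fin n, ∑ j : Fin n, V i j := by
    unfold wOne
    refine Finset.sum_congr rfl fun i _ => Finset.sum_congr rfl fun j _ => ?_
    by_cases h : i = j
    · subst h
      simp [hV, hw]
    · simp [h, hV]
  have hw2 : wTwo n w = ∑ i : Fin n, ∑ j : Fin n, (V i j) ^ 2 := by
    unfold wTwo
    refine Finset.sum_congr rfl fun i _ => Finset.sum_congr rfl fun j _ => ?_
    by_cases h : i = j
    · subst h
      simp [hV, hw]
    · simp [h, hV]
  have hw3 : wThree n w = ∑ i : Fin n, (∑ j : Fin n, V i j) ^ 2 := by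
    unfold wThree
    refine Finset.sum_congr rfl fun i _ => ?_
    congr 1
    refine Finset.sum_congr rfl fun j _ => ?_
    by_cases h : j = i
    · subst h
      simp [hV, hw]
    · simp [h, hV]
  rw [permVar_eq (Zperm n w S)]
  rw [show (∑ π : Equiv.Perm (Fin n), (Zperm n w S π) ^ 2)
      = ∑ π : Equiv.Perm (Fin n), (∑ i : Fin n, ∑ j : Fin n, V i j * S (π i) (π j)) ^ 2 from
    Finset.sum_congr rfl fun π _ => by rw [hZ π]]
  rw [show (∑ π : Equiv.Perm (Fin n), Zperm n w S π)
      = ∑ π : Equiv.Perm (Fin n), ∑ i : Fin n, ∑ j : Fin n, V i j * S (π i) (π j) from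
    Finset.sum_congr rfl fun π _ => hZ π]
  rw [E2_eq V hVd hVs S hS, E1_eq V hVd S, hw1, hw2, hw3]
  obtain ⟨m, rfl⟩ : ∃ m : ℕ, n = m + 4 := ⟨n - 4, by omega⟩
  have e2 : m + 4 - 2 = m + 2 := by omega
  have e3 : m + 4 - 3 = m + 1 := by omega
  have e4 : m + 4 - 4 = m := by omega
  rw [e2, e3, e4]
  have hfact : ((m + 4).factorial : ℝ)
      = ((m : ℝ) + 4) * ((m : ℝ) + 3) * ((m : ℝ) + 2) * ((m : ℝ) + 1) * (m.factorial : ℝ) := by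
    rw [show m + 4 = (m + 3) + 1 from rfl, Nat.factorial_succ,
      show m + 3 = (m + 2) + 1 from rfl, Nat.factorial_succ,
      show m + 2 = (m + 1) + 1 from rfl, Nat.factorial_succ, Nat.factorial_succ]
    push_cast
    ring
  have hfact2 : ((m + 2).factorial : ℝ) = ((m : ℝ) + 2) * ((m : ℝ) + 1) * (m.factorial : ℝ) := by
    rw [show m + 2 = (m + 1) + 1 from rfl, Nat.factorial_succ, Nat.factorial_succ]
    push_cast
    ring
  have hfact1 : ((m + 1).factorial : ℝ) = ((m : ℝ) + 1) * (m.factorial : ℝ) := by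
    rw [Nat.factorial_succ]
    push_cast
    ring
  have hm : (m.factorial : ℝ) ≠ 0 := Nat.cast_ne_zero.mpr m.factorial_ne_zero
  have h4 : ((m : ℝ) + 4) ≠ 0 := by positivity
  have h3 : ((m : ℝ) + 3) ≠ 0 := by positivity
  have h2 : ((m : ℝ) + 2) ≠ 0 := by positivity
  have h1 : ((m : ℝ) + 1) ≠ 0 := by positivity
  have hcast : ((m + 4 : ℕ) : ℝ) = (m : ℝ) + 4 := by push_cast; ring
  rw [hfact, hfact2, hfact1, hcast]
  have hn1 : ((m : ℝ) + 4) - 1 = (m : ℝ) + 3 := by ring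
  have hn2 : ((m : ℝ) + 4) - 2 = (m : ℝ) + 2 := by ring
  have hn3 : ((m : ℝ) + 4) - 3 = (m : ℝ) + 1 := by ring
  rw [hn1, hn2, hn3]
  field_simp
  ring
end

section
/- Let n ≥ 4 and let S = (S_{ab}) ∈ ℝ^{n×n} be symmetric. For any fixed pairwise distinct indices i, j, k, l in {1,…,n}, the average over all n! permutations π of {1,…,n} of S_{π(i)π(j)} S_{π(k)π(l)} equals (S₁² + 2S₂ − 4S₃)/(n(n−1)(n−2)(n−3)), where S₁ = Σ_{a≠b} S_{ab}, S₂ = Σ_{a≠b} S_{ab}², and S₃ = Σ_{a=1}^n (Σ_{b≠a} S_{ab})². -/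
open Finset

section PermAverageAux

/-- Any four distinct points can be sent to any four distinct points by a permutation. -/
lemma exists_perm_four {α : Type*} [DecidableEq α] {i j k l a b c d : α}
    (hij : i ≠ j) (hik : i ≠ k) (hil : i ≠ l) (hjk : j ≠ k) (hjl : j ≠ l) (hkl : k ≠ l)
    (hab : a ≠ b) (hac : a ≠ c) (had : a ≠ d) (hbc : b ≠ c) (hbd : b ≠ d) (hcd : c ≠ d) :
    ∃ τ : Equiv.Perm α, τ i = a ∧ τ j = b ∧ τ k = c ∧ τ l = d := by
  have key : ∀ (σ : Equiv.Perm α) (u w p : α), σ p ≠ σ u → σ p ≠ w →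
      (Equiv.swap (σ u) w * σ) p = σ p := by
    intro σ u w p h1 h2
    simp [Equiv.Perm.mul_apply, Equiv.swap_apply_of_ne_of_ne h1 h2]
  have key2 : ∀ (σ : Equiv.Perm α) (u w : α), (Equiv.swap (σ u) w * σ) u = w := by
    intro σ u w; simp [Equiv.Perm.mul_apply]
  set σ1 : Equiv.Perm α := Equiv.swap ((1 : Equiv.Perm α) i) a * 1 with hσ1
  have h1i : σ1 i = a := key2 1 i a
  set σ2 : Equiv.Perm α := Equiv.swap (σ1 j) b * σ1 with hσ2
  have h2i : σ2 i = a := by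
    rw [hσ2, key σ1 j b i (σ1.injective.ne hij) (h1i ▸ hab), h1i]
  have h2j : σ2 j = b := key2 σ1 j b
  set σ3 : Equiv.Perm α := Equiv.swap (σ2 k) c * σ2 with hσ3
  have h3i : σ3 i = a := by
    rw [hσ3, key σ2 k c i (σ2.injective.ne hik) (h2i ▸ hac), h2i]
  have h3j : σ3 j = b := by
    rw [hσ3, key σ2 k c j (σ2.injective.ne hjk) (h2j ▸ hbc), h2j]
  have h3k : σ3 k = c := key2 σ2 k c
  refine ⟨Equiv.swap (σ3 l) d * σ3, ?_, ?_, ?_, key2 σ3 l d⟩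
  · rw [key σ3 l d i (σ3.injective.ne hil) (h3i ▸ had), h3i]
  · rw [key σ3 l d j (σ3.injective.ne hjl) (h3j ▸ hbd), h3j]
  · rw [key σ3 l d k (σ3.injective.ne hkl) (h3k ▸ hcd), h3k]

/-- The type of quadruples of indices. -/
abbrev QD (n : ℕ) := Fin n × Fin n × Fin n × Fin n

/-- Pairwise distinctness of a quadruple. -/
def Pd {n : ℕ} (v : QD n) : Prop :=
  ¬(v.1 = v.2.1 ∨ v.2.2.1 = v.2.2.2 ∨ v.2.2.1 = v.1 ∨ v.2.2.1 = v.2.1 ∨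
    v.2.2.2 = v.1 ∨ v.2.2.2 = v.2.1)

instance {n : ℕ} : DecidablePred (Pd (n := n)) := fun _ => by unfold Pd; infer_instance

/-- The finset of pairwise distinct quadruples. -/
def Dq (n : ℕ) : Finset (QD n) := univ.filter Pd

/-- Evaluation of a permutation at the four indices. -/
def Phi {n : ℕ} (i j k l : Fin n) (π : Equiv.Perm (Fin n)) : QD n := (π i, π j, π k, π l)

lemma himage {n : ℕ} {i j k l : Fin n}
    (hij : i ≠ j) (hik : i ≠ k) (hil : i ≠ l)
    (hjk : j ≠ k) (hjl : j ≠ l) (hkl : k ≠ l) :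
    (univ : Finset (Equiv.Perm (Fin n))).image (Phi i j k l) = Dq n := by
  ext v
  simp only [mem_image, mem_univ, true_and, Dq, mem_filter, Pd]
  constructor
  · rintro ⟨π, rfl⟩
    simp only [Phi]
    push_neg
    exact ⟨π.injective.ne hij, π.injective.ne hkl, π.injective.ne hik.symm,
      π.injective.ne hjk.symm, π.injective.ne hil.symm, π.injective.ne hjl.symm⟩
  · obtain ⟨a, b, c, d⟩ := v
    intro hv
    push_neg at hv
    obtain ⟨h1, h2, h3, h4, h5, h6⟩ := hv
    obtain ⟨τ, t1, t2, t3, t4⟩ := exists_perm_four hij hik hil hjk hjl hkl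
      h1 h3.symm h5.symm h4.symm h6.symm h2
    exact ⟨τ, by simp [Phi, t1, t2, t3, t4]⟩

lemma hfiber {n : ℕ} {i j k l : Fin n}
    (hij : i ≠ j) (hik : i ≠ k) (hil : i ≠ l)
    (hjk : j ≠ k) (hjl : j ≠ l) (hkl : k ≠ l) : ∀ v ∈ Dq n,
    (univ.filter fun π : Equiv.Perm (Fin n) => Phi i j k l π = v).card
      = (univ.filter fun π : Equiv.Perm (Fin n) => Phi i j k l π = (i, j, k, l)).card := by
  rintro ⟨a, b, c, d⟩ hv
  simp only [Dq, mem_filter, mem_univ, true_and, Pd] at hv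
  push_neg at hv
  obtain ⟨h1, h2, h3, h4, h5, h6⟩ := hv
  obtain ⟨τ, t1, t2, t3, t4⟩ := exists_perm_four hij hik hil hjk hjl hkl
    h1 h3.symm h5.symm h4.symm h6.symm h2
  apply Finset.card_nbij' (fun π => τ⁻¹ * π) (fun π => τ * π)
  · intro π hπ
    simp only [mem_coe, mem_filter, mem_univ, true_and, Phi, Prod.mk.injEq] at hπ ⊢
    obtain ⟨e1, e2, e3, e4⟩ := hπ
    refine ⟨?_, ?_, ?_, ?_⟩ <;>
      simp [Equiv.Perm.mul_apply, e1, e2, e3, e4, ← t1, ← t2, ← t3, ← t4]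
  · intro π hπ
    simp only [mem_coe, mem_filter, mem_univ, true_and, Phi, Prod.mk.injEq] at hπ ⊢
    obtain ⟨e1, e2, e3, e4⟩ := hπ
    refine ⟨?_, ?_, ?_, ?_⟩ <;>
      simp [Equiv.Perm.mul_apply, e1, e2, e3, e4, t1, t2, t3, t4]
  · intro π _; simp [mul_assoc]
  · intro π _; simp [← mul_assoc]

lemma hDqcard {n : ℕ} : (Dq n).card = n * (n - 1) * (n - 2) * (n - 3) := by
  have h : Fintype.card (Fin 4 ↪ Fin n) = (Dq n).card := by
    rw [← Finset.card_univ]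
    apply Finset.card_nbij (fun f => (f 0, f 1, f 2, f 3))
    · intro f _
      simp only [mem_coe, Dq, mem_filter, mem_univ, true_and, Pd]
      push_neg
      refine ⟨f.injective.ne (by decide), f.injective.ne (by decide),
        f.injective.ne (by decide), f.injective.ne (by decide),
        f.injective.ne (by decide), f.injective.ne (by decide)⟩
    · intro f _ g _ hfg
      simp only [Prod.mk.injEq] at hfg
      ext x
      fin_cases x <;> simp [hfg.1, hfg.2.1, hfg.2.2.1, hfg.2.2.2]
    · rintro ⟨a, b, c, d⟩ hv
      simp only [Finset.coe_filter, Set.mem_setOf_eq, Dq, mem_coe, mem_filter,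
        mem_univ, true_and, Pd] at hv
      push_neg at hv
      obtain ⟨h1, h2, h3, h4, h5, h6⟩ := hv
      have hinj : Function.Injective ![a, b, c, d] := by
        intro x y hxy
        fin_cases x <;> fin_cases y <;> simp_all
      refine ⟨⟨![a, b, c, d], hinj⟩, ?_, ?_⟩
      · simp
      · rfl
  rw [← h, Fintype.card_embedding_eq, Fintype.card_fin, Fintype.card_fin]
  simp [Nat.descFactorial]
  ring

lemma decomp7 {α : Type*} [DecidableEq α] (S : α → α → ℝ) (a b c d : α) :
    (if a = b then (0:ℝ) else S a b) * (if c = d then 0 else S c d)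
    = (if a = b ∨ c = d ∨ c = a ∨ c = b ∨ d = a ∨ d = b then 0 else S a b * S c d)
    + (if d = b then if c = a then (if a = b then 0 else S a b * S c d) else 0 else 0)
    + (if d = a then if c = b then (if a = b then 0 else S a b * S c d) else 0 else 0)
    + (if c = a then (if a = b ∨ d = a ∨ d = b then 0 else S a b * S c d) else 0)
    + (if c = b then (if a = b ∨ d = a ∨ d = b then 0 else S a b * S c d) else 0)
    + (if d = a then (if a = b ∨ c = a ∨ c = b then 0 else S a b * S c d) else 0)
    + (if d = b then (if a = b ∨ c = a ∨ c = b then 0 else S a b * S c d) else 0) := by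
  by_cases hab : a = b <;> by_cases hcd : c = d <;> by_cases hca : c = a <;>
    by_cases hcb : c = b <;> by_cases hda : d = a <;> by_cases hdb : d = b <;>
    simp_all

lemma decomp2 {α : Type*} [DecidableEq α] (S : α → α → ℝ) (a b d : α) :
    (if b = a then (0:ℝ) else S a b) * (if d = a then 0 else S a d)
    = (if d = b then (if b = a then 0 else S a b * S a d) else 0)
    + (if a = b ∨ d = a ∨ d = b then 0 else S a b * S a d) := by
  by_cases hab : a = b <;> by_cases hba : b = a <;> by_cases hda : d = a <;>
    by_cases hdb : d = b <;> simp_all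

lemma sum_distinct_quadruples {n : ℕ} (S : Fin n → Fin n → ℝ)
    (hS : ∀ a b, S a b = S b a) :
    (∑ a : Fin n, ∑ b : Fin n, ∑ c : Fin n, ∑ d : Fin n,
        if a = b ∨ c = d ∨ c = a ∨ c = b ∨ d = a ∨ d = b then 0 else S a b * S c d)
    = (∑ a : Fin n, ∑ b : Fin n, if a = b then 0 else S a b) ^ 2 +
        2 * (∑ a : Fin n, ∑ b : Fin n, if a = b then 0 else (S a b) ^ 2) -
        4 * (∑ a : Fin n, (∑ b : Fin n, if b = a then 0 else S a b) ^ 2) := by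
  set S2 : ℝ := ∑ a : Fin n, ∑ b : Fin n, if a = b then 0 else S a b * S a b with hS2
  set U : ℝ := ∑ a : Fin n, ∑ b : Fin n, ∑ c : Fin n,
      if a = b ∨ c = a ∨ c = b then 0 else S a b * S a c with hU
  have hsq : (∑ a : Fin n, ∑ b : Fin n, if a = b then (0:ℝ) else S a b) ^ 2
      = ∑ a : Fin n, ∑ b : Fin n, ∑ c : Fin n, ∑ d : Fin n,
          (if a = b then (0:ℝ) else S a b) * (if c = d then 0 else S c d) := by
    rw [sq, Fintype.sum_mul_sum]
    refine Finset.sum_congr rfl fun a _ => ?_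
    rw [Finset.sum_comm]
    refine Finset.sum_congr rfl fun b _ => ?_
    rw [Finset.sum_mul_sum]
  have hS2' : (∑ a : Fin n, ∑ b : Fin n, if a = b then (0:ℝ) else (S a b) ^ 2) = S2 := by
    rw [hS2]
    refine Finset.sum_congr rfl fun a _ => Finset.sum_congr rfl fun b _ => ?_
    rw [sq]
  have hS3 : (∑ a : Fin n, (∑ b : Fin n, if b = a then (0:ℝ) else S a b) ^ 2) = S2 + U := by
    have : ∀ a : Fin n, (∑ b : Fin n, if b = a then (0:ℝ) else S a b) ^ 2
        = (∑ b : Fin n, if a = b then (0:ℝ) else S a b * S a b)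
          + ∑ b : Fin n, ∑ c : Fin n, if a = b ∨ c = a ∨ c = b then 0 else S a b * S a c := by
      intro a
      rw [sq, Fintype.sum_mul_sum]
      simp only [decomp2 S a, Finset.sum_add_distrib, Finset.sum_ite_eq', Finset.mem_univ,
        if_true]
      congr 1
      exact Finset.sum_congr rfl fun b _ => if_congr eq_comm rfl rfl
    simp only [this, Finset.sum_add_distrib, hS2, hU]
  have hexp := hsq
  simp only [decomp7 S, Finset.sum_add_distrib, Finset.sum_ite_irrel, Finset.sum_const_zero,
    Finset.sum_ite_eq', Finset.mem_univ, if_true] at hexp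
  have e3 : (∑ a : Fin n, ∑ b : Fin n, if a = b then (0:ℝ) else S a b * S b a) = S2 := by
    rw [hS2]
    refine Finset.sum_congr rfl fun a _ => Finset.sum_congr rfl fun b _ => ?_
    rw [hS b a]
  have e4 : (∑ a : Fin n, ∑ b : Fin n, ∑ c : Fin n,
      if a = b ∨ c = a ∨ c = b then (0:ℝ) else S a b * S a c) = U := rfl
  have e5 : (∑ a : Fin n, ∑ b : Fin n, ∑ c : Fin n,
      if a = b ∨ c = a ∨ c = b then (0:ℝ) else S a b * S b c) = U := by
    rw [Finset.sum_comm, hU]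
    refine Finset.sum_congr rfl fun a _ => Finset.sum_congr rfl fun b _ =>
      Finset.sum_congr rfl fun c _ => ?_
    rw [hS b a]
    exact if_congr (by tauto) rfl rfl
  have e6 : (∑ a : Fin n, ∑ b : Fin n, ∑ c : Fin n,
      if a = b ∨ c = a ∨ c = b then (0:ℝ) else S a b * S c a) = U := by
    rw [hU]
    refine Finset.sum_congr rfl fun a _ => Finset.sum_congr rfl fun b _ =>
      Finset.sum_congr rfl fun c _ => ?_
    rw [hS c a]
  have e7 : (∑ a : Fin n, ∑ b : Fin n, ∑ c : Fin n,
      if a = b ∨ c = a ∨ c = b then (0:ℝ) else S a b * S c b) = U := by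
    rw [Finset.sum_comm, hU]
    refine Finset.sum_congr rfl fun a _ => Finset.sum_congr rfl fun b _ =>
      Finset.sum_congr rfl fun c _ => ?_
    rw [hS b a, hS c a]
    exact if_congr (by tauto) rfl rfl
  rw [← hS2, e3, e4, e5, e6, e7] at hexp
  rw [hS2', hS3]
  linarith [hexp]

end PermAverageAux

/-- For `n ≥ 4`, a symmetric real `n×n` matrix `S`, and pairwise
distinct indices `i,j,k,l`, the average of `S_{π(i)π(j)} S_{π(k)π(l)}` over all
`n!` permutations `π` equals `(S₁² + 2S₂ − 4S₃)/(n(n−1)(n−2)(n−3))`, where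
`S₁ = Σ_{a≠b} S_{ab}`, `S₂ = Σ_{a≠b} S_{ab}²`, and `S₃ = Σ_a (Σ_{b≠a} S_{ab})²`. -/
theorem perm_average_disjoint_pairs (n : ℕ) (hn : 4 ≤ n)
    (S : Fin n → Fin n → ℝ) (hS : ∀ a b, S a b = S b a)
    (i j k l : Fin n)
    (hij : i ≠ j) (hik : i ≠ k) (hil : i ≠ l)
    (hjk : j ≠ k) (hjl : j ≠ l) (hkl : k ≠ l) :
    (∑ π : Equiv.Perm (Fin n), S (π i) (π j) * S (π k) (π l)) / (Nat.factorial n : ℝ) =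
      ((∑ a : Fin n, ∑ b : Fin n, if a = b then 0 else S a b) ^ 2 +
        2 * (∑ a : Fin n, ∑ b : Fin n, if a = b then 0 else (S a b) ^ 2) -
        4 * (∑ a : Fin n, (∑ b : Fin n, if b = a then 0 else S a b) ^ 2)) /
        ((n : ℝ) * ((n : ℝ) - 1) * ((n : ℝ) - 2) * ((n : ℝ) - 3)) := by
  classical
  set g : QD n → ℝ := fun v => S v.1 v.2.1 * S v.2.2.1 v.2.2.2 with hg
  set c := (univ.filter fun π : Equiv.Perm (Fin n) => Phi i j k l π = (i, j, k, l)).card with hc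
  have hsum : (∑ π : Equiv.Perm (Fin n), S (π i) (π j) * S (π k) (π l))
      = (c : ℝ) * ∑ v ∈ Dq n, g v := by
    have h0 : (∑ π : Equiv.Perm (Fin n), S (π i) (π j) * S (π k) (π l))
        = ∑ π : Equiv.Perm (Fin n), g (Phi i j k l π) := rfl
    rw [h0, Finset.sum_comp g (Phi i j k l), himage hij hik hil hjk hjl hkl]
    rw [Finset.sum_congr rfl fun v hv => by
      rw [hfiber hij hik hil hjk hjl hkl v hv]]
    rw [← Finset.smul_sum, nsmul_eq_mul]
  have hcount : Nat.factorial n = (Dq n).card * c := by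
    have h1 : (univ : Finset (Equiv.Perm (Fin n))).card
        = ∑ v ∈ Dq n, (univ.filter fun π : Equiv.Perm (Fin n) => Phi i j k l π = v).card := by
      apply Finset.card_eq_sum_card_fiberwise
      intro π _
      rw [← himage hij hik hil hjk hjl hkl]
      exact Finset.mem_image_of_mem _ (mem_univ π)
    rw [Finset.card_univ, Fintype.card_perm, Fintype.card_fin] at h1
    rw [h1, Finset.sum_congr rfl (hfiber hij hik hil hjk hjl hkl), Finset.sum_const,
      smul_eq_mul, hc]
  have hc0 : c ≠ 0 := by
    rw [hc]
    apply Finset.card_ne_zero_of_mem (a := 1)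
    simp only [mem_filter, mem_univ, true_and]
    rfl
  have hDsum : (∑ v ∈ Dq n, g v)
      = ∑ a : Fin n, ∑ b : Fin n, ∑ c : Fin n, ∑ d : Fin n,
          if a = b ∨ c = d ∨ c = a ∨ c = b ∨ d = a ∨ d = b then 0 else S a b * S c d := by
    rw [Dq, Finset.sum_filter]
    rw [Fintype.sum_prod_type]
    refine Finset.sum_congr rfl fun a _ => ?_
    rw [Fintype.sum_prod_type]
    refine Finset.sum_congr rfl fun b _ => ?_
    rw [Fintype.sum_prod_type]
    refine Finset.sum_congr rfl fun x _ => Finset.sum_congr rfl fun d _ => ?_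
    simp only [Pd, hg, ite_not]
  have hcast : ((Nat.factorial n : ℕ) : ℝ)
      = ((n : ℝ) * ((n : ℝ) - 1) * ((n : ℝ) - 2) * ((n : ℝ) - 3)) * (c : ℝ) := by
    rw [hcount, hDqcard]
    push_cast [Nat.cast_sub (by omega : 1 ≤ n), Nat.cast_sub (by omega : 2 ≤ n),
      Nat.cast_sub (by omega : 3 ≤ n)]
    ring
  rw [hsum, hDsum, sum_distinct_quadruples S hS, hcast, mul_comm (c : ℝ) _]
  rw [mul_div_mul_right _ _ (by exact_mod_cast hc0 : (c : ℝ) ≠ 0)]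
end

section
/- Let X_i = (X_{i1},…,X_{ip}) and X_j = (X_{j1},…,X_{jp}) be random vectors in ℝ^p with E(X_{uk}⁴) ≤ C for all u ∈ {i,j} and all k ∈ {1,…,p}, and define Δ_{ij} = max_{u,v,r,s ∈ {i,j}} Σ_{1≤k<l≤p} |Cov(X_{uk}X_{vk}, X_{rl}X_{sl})|. Then the p-scaled squared-Euclidean similarity S*_{ij} = −(1/p) Σ_{k=1}^p (X_{ik} − X_{jk})² satisfies Var(S*_{ij}) ≤ (16 C p + 32 Δ_{ij})/p². In particular, if Δ_{ij} = o(p²) then Var(S*_{ij}) → 0 as p → ∞. -/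
open Finset Filter MeasureTheory ProbabilityTheory

/-- Population covariance of two real random variables. -/
noncomputable def popCov {Ω : Type*} [MeasurableSpace Ω] (P : Measure Ω)
    (f g : Ω → ℝ) : ℝ :=
  ∫ ω, (f ω - ∫ ω', f ω' ∂P) * (g ω - ∫ ω', g ω' ∂P) ∂P

/-- `Δ_{ij} = max_{u,v,r,s ∈ {i,j}} Σ_{k<l} |Cov(X_{uk}X_{vk}, X_{rl}X_{sl})|`,
where the two coordinates of the pair `(X_i, X_j)` are selected by Booleans. -/
noncomputable def Delta {Ω : Type*} [MeasurableSpace Ω] (P : Measure Ω)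
    (p : ℕ) (Xi Xj : Ω → Fin p → ℝ) : ℝ :=
  ⨆ u : Bool, ⨆ v : Bool, ⨆ r : Bool, ⨆ s : Bool,
    ∑ k : Fin p, ∑ l : Fin p,
      if k < l then
        |popCov P (fun ω => (if u then Xi else Xj) ω k * (if v then Xi else Xj) ω k)
          (fun ω => (if r then Xi else Xj) ω l * (if s then Xi else Xj) ω l)|
      else 0

/-- The `p`-scaled squared-Euclidean similarity
`S*_{ij} = −(1/p) Σ_k (X_{ik} − X_{jk})²`. -/
noncomputable def Sstar {Ω : Type*} (p : ℕ) (Xi Xj : Ω → Fin p → ℝ) (ω : Ω) : ℝ :=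
  -(1 / (p : ℝ)) * ∑ k : Fin p, (Xi ω k - Xj ω k) ^ 2

section Aux
variable {Ω : Type*} [MeasurableSpace Ω] (P : Measure Ω)

lemma popCov_const_mul (a b : ℝ) (F G : Ω → ℝ) :
    popCov P (fun ω => a * F ω) (fun ω => b * G ω) = (a * b) * popCov P F G := by
  unfold popCov
  simp only [integral_const_mul]
  rw [show (fun ω => (a * F ω - a * ∫ ω', F ω' ∂P) * (b * G ω - b * ∫ ω', G ω' ∂P))
      = fun ω => (a * b) * ((F ω - ∫ ω', F ω' ∂P) * (G ω - ∫ ω', G ω' ∂P)) from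
    funext fun ω => by ring]
  exact integral_const_mul _ _

lemma popCov_comm (F G : Ω → ℝ) : popCov P F G = popCov P G F := by
  unfold popCov; congr 1; funext ω; ring

lemma l2_integrable_mul {F G : Ω → ℝ} (hF : MemLp F 2 P) (hG : MemLp G 2 P) :
    Integrable (fun ω => F ω * G ω) P := by
  have hF2 : Integrable (fun ω => F ω ^ 2) P :=
    (memLp_two_iff_integrable_sq hF.aestronglyMeasurable).mp hF
  have hG2 : Integrable (fun ω => G ω ^ 2) P :=
    (memLp_two_iff_integrable_sq hG.aestronglyMeasurable).mp hG
  refine Integrable.mono' ((hF2.add hG2).const_mul (1/2 : ℝ))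
    (hF.aestronglyMeasurable.mul hG.aestronglyMeasurable) ?_
  filter_upwards with ω
  simp only [Pi.add_apply]
  rw [Real.norm_eq_abs, abs_mul]
  nlinarith [sq_nonneg (|F ω| - |G ω|), sq_abs (F ω), sq_abs (G ω)]

variable [IsProbabilityMeasure P]

lemma popCov_sum_sum {ι κ : Type*} [Fintype ι] [Fintype κ]
    (f : ι → Ω → ℝ) (g : κ → Ω → ℝ)
    (hf : ∀ i, MemLp (f i) 2 P) (hg : ∀ j, MemLp (g j) 2 P) :
    popCov P (fun ω => ∑ i, f i ω) (fun ω => ∑ j, g j ω)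
      = ∑ i, ∑ j, popCov P (f i) (g j) := by
  have hfi : ∀ i, Integrable (f i) P := fun i => (hf i).integrable (by norm_num)
  have hgi : ∀ j, Integrable (g j) P := fun j => (hg j).integrable (by norm_num)
  have hc : ∀ i, MemLp (fun ω => f i ω - ∫ ω', f i ω' ∂P) 2 P :=
    fun i => (hf i).sub (memLp_const _)
  have hd : ∀ j, MemLp (fun ω => g j ω - ∫ ω', g j ω' ∂P) 2 P :=
    fun j => (hg j).sub (memLp_const _)
  unfold popCov
  rw [integral_finset_sum _ fun i _ => hfi i, integral_finset_sum _ fun j _ => hgi j]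
  have key : (fun ω => (∑ i, f i ω - ∑ i, ∫ ω', f i ω' ∂P)
      * (∑ j, g j ω - ∑ j, ∫ ω', g j ω' ∂P))
      = fun ω => ∑ i, ∑ j, (f i ω - ∫ ω', f i ω' ∂P) * (g j ω - ∫ ω', g j ω' ∂P) := by
    funext ω
    rw [← Finset.sum_sub_distrib, ← Finset.sum_sub_distrib, Finset.sum_mul_sum]
  rw [key, integral_finset_sum _ fun i _ =>
    integrable_finset_sum _ fun j _ => l2_integrable_mul P (hc i) (hd j)]
  exact Finset.sum_congr rfl fun i _ =>
    integral_finset_sum _ fun j _ => l2_integrable_mul P (hc i) (hd j)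

lemma var_eq_popCov (X : Ω → ℝ) (hX : MemLp X 2 P) :
    variance X P = popCov P X X := by
  rw [variance_eq_integral hX.aestronglyMeasurable.aemeasurable]
  unfold popCov
  congr 1; funext ω; simp [sq]

lemma popCov_self_le (Y : Ω → ℝ) (hY : MemLp Y 2 P) :
    popCov P Y Y ≤ ∫ ω, Y ω ^ 2 ∂P := by
  have hY1 : Integrable Y P := hY.integrable (by norm_num)
  have hY2 : Integrable (fun ω => Y ω ^ 2) P :=
    (memLp_two_iff_integrable_sq hY.aestronglyMeasurable).mp hY
  set m := ∫ ω, Y ω ∂P with hm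
  have heq : popCov P Y Y = (∫ ω, Y ω ^ 2 ∂P) - m ^ 2 := by
    unfold popCov
    rw [← hm]
    rw [show (fun ω => (Y ω - m) * (Y ω - m))
        = fun ω => (Y ω ^ 2 - (2 * m) * Y ω) + m ^ 2 from funext fun ω => by ring]
    have h5 : Integrable (fun ω => Y ω ^ 2 - 2 * m * Y ω) P := by
      exact hY2.sub (hY1.const_mul (2 * m))
    have h6 : Integrable (fun _ : Ω => m ^ 2) P := integrable_const _
    rw [integral_add h5 h6, integral_sub hY2 (by exact hY1.const_mul (2 * m)),
      integral_const_mul, integral_const]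
    simp
    ring
  rw [heq]
  nlinarith [sq_nonneg m]

end Aux

lemma sum_swap4 {α β γ δ M : Type*} [Fintype α] [Fintype β] [Fintype γ] [Fintype δ]
    [AddCommMonoid M] (F : α → β → γ → δ → M) :
    ∑ a, ∑ b, ∑ c, ∑ d, F a b c d = ∑ c, ∑ d, ∑ a, ∑ b, F a b c d := by
  calc ∑ a, ∑ b, ∑ c, ∑ d, F a b c d
      = ∑ a, ∑ c, ∑ b, ∑ d, F a b c d :=
        Finset.sum_congr rfl fun a _ => Finset.sum_comm
    _ = ∑ c, ∑ a, ∑ b, ∑ d, F a b c d := Finset.sum_comm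
    _ = ∑ c, ∑ a, ∑ d, ∑ b, F a b c d :=
        Finset.sum_congr rfl fun c _ => Finset.sum_congr rfl fun a _ =>
          Finset.sum_comm
    _ = ∑ c, ∑ d, ∑ a, ∑ b, F a b c d :=
        Finset.sum_congr rfl fun c _ => Finset.sum_comm

lemma le_iSup_bool {F : Bool → ℝ} (b : Bool) : F b ≤ ⨆ x, F x :=
  le_ciSup (Set.Finite.bddAbove (Set.finite_range F)) b

def csgn (u : Bool) : ℝ := if u then 1 else -1

noncomputable def gprod {Ω : Type*} {p : ℕ} (Xi Xj : Ω → Fin p → ℝ)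
    (u v : Bool) (k : Fin p) : Ω → ℝ :=
  fun ω => (if u then Xi else Xj) ω k * (if v then Xi else Xj) ω k

noncomputable def hterm {Ω : Type*} {p : ℕ} (Xi Xj : Ω → Fin p → ℝ)
    (uv : Bool × Bool) (k : Fin p) : Ω → ℝ :=
  fun ω => (csgn uv.1 * csgn uv.2) * gprod Xi Xj uv.1 uv.2 k ω

lemma Delta_eq {Ω : Type*} [MeasurableSpace Ω] (P : Measure Ω) (p : ℕ)
    (Xi Xj : Ω → Fin p → ℝ) :
    Delta P p Xi Xj = ⨆ u : Bool, ⨆ v : Bool, ⨆ r : Bool, ⨆ s : Bool,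
      ∑ k : Fin p, ∑ l : Fin p,
        if k < l then |popCov P (gprod Xi Xj u v k) (gprod Xi Xj r s l)| else 0 := rfl

lemma main_bound {Ω : Type*} [MeasurableSpace Ω] (P : Measure Ω)
    [IsProbabilityMeasure P] (C : ℝ) (hC : 0 ≤ C) (p : ℕ) (Xi Xj : Ω → Fin p → ℝ)
    (hmeas : ∀ k : Fin p, Measurable (fun ω => Xi ω k) ∧ Measurable (fun ω => Xj ω k))
    (hint : ∀ k : Fin p,
      Integrable (fun ω => (Xi ω k) ^ 4) P ∧ Integrable (fun ω => (Xj ω k) ^ 4) P)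
    (hmom : ∀ k : Fin p,
      (∫ ω, (Xi ω k) ^ 4 ∂P) ≤ C ∧ (∫ ω, (Xj ω k) ^ 4 ∂P) ≤ C) :
    variance (Sstar p Xi Xj) P ≤
      (16 * C * (p : ℝ) + 32 * Delta P p Xi Xj) / (p : ℝ) ^ 2 := by
  -- basic facts about selected coordinates
  have hAm : ∀ u : Bool, ∀ k : Fin p, Measurable (fun ω => (if u then Xi else Xj) ω k) := by
    intro u k; cases u
    · exact (hmeas k).2
    · exact (hmeas k).1
  have hA4 : ∀ u : Bool, ∀ k : Fin p,
      Integrable (fun ω => ((if u then Xi else Xj) ω k) ^ 4) P := by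
    intro u k; cases u
    · exact (hint k).2
    · exact (hint k).1
  have hgm : ∀ u v : Bool, ∀ k : Fin p, Measurable (gprod Xi Xj u v k) := by
    intro u v k; unfold gprod; exact (hAm u k).mul (hAm v k)
  have hg2 : ∀ u v : Bool, ∀ k : Fin p, MemLp (gprod Xi Xj u v k) 2 P := by
    intro u v k
    rw [memLp_two_iff_integrable_sq (hgm u v k).aestronglyMeasurable]
    refine Integrable.mono' (((hA4 u k).add (hA4 v k)).const_mul (1/2 : ℝ))
      (((hgm u v k).pow_const 2).aestronglyMeasurable) ?_
    filter_upwards with ω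
    simp only [Pi.add_apply, gprod]
    rw [Real.norm_eq_abs, abs_of_nonneg (sq_nonneg _)]
    nlinarith [sq_nonneg (((if u then Xi else Xj) ω k) ^ 2 - ((if v then Xi else Xj) ω k) ^ 2)]
  have hh2 : ∀ uv : Bool × Bool, ∀ k : Fin p, MemLp (hterm Xi Xj uv k) 2 P := by
    intro uv k; unfold hterm; exact (hg2 uv.1 uv.2 k).const_mul _
  have hYeq : ∀ k : Fin p, (fun ω => (Xi ω k - Xj ω k) ^ 2)
      = fun ω => ∑ uv : Bool × Bool, hterm Xi Xj uv k ω := by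
    intro k; funext ω
    simp [hterm, gprod, csgn, Fintype.sum_prod_type, Fintype.sum_bool]
    ring
  have hY2 : ∀ k : Fin p, MemLp (fun ω => (Xi ω k - Xj ω k) ^ 2) 2 P := by
    intro k; rw [hYeq k]
    exact memLp_finset_sum _ fun uv _ => hh2 uv k
  have hT2 : MemLp (fun ω => ∑ k : Fin p, (Xi ω k - Xj ω k) ^ 2) 2 P :=
    memLp_finset_sum _ fun k _ => hY2 k
  -- variance rewrite
  have hS : Sstar p Xi Xj
      = fun ω => (-(1 / (p : ℝ))) * ∑ k : Fin p, (Xi ω k - Xj ω k) ^ 2 := rfl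
  have hSvar : variance (Sstar p Xi Xj) P
      = ((-(1 / (p : ℝ))) * (-(1 / (p : ℝ)))) *
        popCov P (fun ω => ∑ k : Fin p, (Xi ω k - Xj ω k) ^ 2)
          (fun ω => ∑ k : Fin p, (Xi ω k - Xj ω k) ^ 2) := by
    rw [var_eq_popCov P _ (by rw [hS]; exact hT2.const_mul _), hS, popCov_const_mul]
  have hsum : popCov P (fun ω => ∑ k : Fin p, (Xi ω k - Xj ω k) ^ 2)
        (fun ω => ∑ k : Fin p, (Xi ω k - Xj ω k) ^ 2)
      = ∑ k : Fin p, ∑ l : Fin p,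
          popCov P (fun ω => (Xi ω k - Xj ω k) ^ 2) (fun ω => (Xi ω l - Xj ω l) ^ 2) :=
    popCov_sum_sum P _ _ hY2 hY2
  -- diagonal bound
  have hdiag : ∀ k : Fin p,
      popCov P (fun ω => (Xi ω k - Xj ω k) ^ 2) (fun ω => (Xi ω k - Xj ω k) ^ 2)
        ≤ 16 * C := by
    intro k
    refine (popCov_self_le P _ (hY2 k)).trans ?_
    have h8 : Integrable (fun ω => ((Xi ω k - Xj ω k) ^ 2) ^ 2) P :=
      (memLp_two_iff_integrable_sq (hY2 k).aestronglyMeasurable).mp (hY2 k)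
    have hb : Integrable (fun ω => 8 * ((Xi ω k) ^ 4 + (Xj ω k) ^ 4)) P :=
      ((hint k).1.add (hint k).2).const_mul 8
    calc (∫ ω, ((Xi ω k - Xj ω k) ^ 2) ^ 2 ∂P)
        ≤ ∫ ω, 8 * ((Xi ω k) ^ 4 + (Xj ω k) ^ 4) ∂P := by
          refine integral_mono h8 hb fun ω => ?_
          nlinarith [sq_nonneg (Xi ω k + Xj ω k), sq_nonneg (Xi ω k - Xj ω k),
            sq_nonneg ((Xi ω k) ^ 2 - (Xj ω k) ^ 2), sq_nonneg ((Xi ω k) ^ 2 + (Xj ω k) ^ 2)]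
      _ = 8 * ((∫ ω, (Xi ω k) ^ 4 ∂P) + ∫ ω, (Xj ω k) ^ 4 ∂P) := by
          rw [integral_const_mul, integral_add (hint k).1 (hint k).2]
      _ ≤ 8 * (C + C) := by
          have h1 := (hmom k).1; have h2 := (hmom k).2; linarith
      _ = 16 * C := by ring
  -- off-diagonal bound via the 16 products
  have hcov_bound : ∀ k l : Fin p,
      |popCov P (fun ω => (Xi ω k - Xj ω k) ^ 2) (fun ω => (Xi ω l - Xj ω l) ^ 2)|
        ≤ ∑ uv : Bool × Bool, ∑ rs : Bool × Bool,
            |popCov P (gprod Xi Xj uv.1 uv.2 k) (gprod Xi Xj rs.1 rs.2 l)| := by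
    intro k l
    rw [hYeq k, hYeq l, popCov_sum_sum P _ _ (fun uv => hh2 uv k) (fun rs => hh2 rs l)]
    refine (Finset.abs_sum_le_sum_abs _ _).trans
      (Finset.sum_le_sum fun uv _ => (Finset.abs_sum_le_sum_abs _ _).trans
        (Finset.sum_le_sum fun rs _ => ?_))
    have hpc : popCov P (hterm Xi Xj uv k) (hterm Xi Xj rs l)
        = ((csgn uv.1 * csgn uv.2) * (csgn rs.1 * csgn rs.2)) *
            popCov P (gprod Xi Xj uv.1 uv.2 k) (gprod Xi Xj rs.1 rs.2 l) := by
      unfold hterm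
      exact popCov_const_mul P _ _ _ _
    rw [hpc, abs_mul]
    have hc1 : |(csgn uv.1 * csgn uv.2) * (csgn rs.1 * csgn rs.2)| = 1 := by
      rcases uv with ⟨u, v⟩; rcases rs with ⟨r, s⟩
      cases u <;> cases v <;> cases r <;> cases s <;> simp [csgn]
    rw [hc1, one_mul]
  have hDle : ∀ u v r s : Bool,
      (∑ k : Fin p, ∑ l : Fin p,
        if k < l then |popCov P (gprod Xi Xj u v k) (gprod Xi Xj r s l)| else 0)
        ≤ Delta P p Xi Xj := by
    intro u v r s
    rw [Delta_eq]
    refine le_trans ?_ (le_iSup_bool u)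
    refine le_trans ?_ (le_iSup_bool v)
    refine le_trans ?_ (le_iSup_bool r)
    exact le_iSup_bool (F := fun s => ∑ k : Fin p, ∑ l : Fin p,
      if k < l then |popCov P (gprod Xi Xj u v k) (gprod Xi Xj r s l)| else 0) s
  have key2 : (∑ k : Fin p, ∑ l : Fin p,
      if k < l then
        |popCov P (fun ω => (Xi ω k - Xj ω k) ^ 2) (fun ω => (Xi ω l - Xj ω l) ^ 2)|
      else 0) ≤ 16 * Delta P p Xi Xj := by
    have step1 : ∀ k l : Fin p,
        (if k < l then
          |popCov P (fun ω => (Xi ω k - Xj ω k) ^ 2) (fun ω => (Xi ω l - Xj ω l) ^ 2)|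
        else 0)
        ≤ ∑ uv : Bool × Bool, ∑ rs : Bool × Bool,
            (if k < l then
              |popCov P (gprod Xi Xj uv.1 uv.2 k) (gprod Xi Xj rs.1 rs.2 l)| else 0) := by
      intro k l
      by_cases hkl : k < l
      · simp only [if_pos hkl]; exact hcov_bound k l
      · simp [if_neg hkl]
    calc (∑ k : Fin p, ∑ l : Fin p,
        if k < l then
          |popCov P (fun ω => (Xi ω k - Xj ω k) ^ 2) (fun ω => (Xi ω l - Xj ω l) ^ 2)|
        else 0)
        ≤ ∑ k : Fin p, ∑ l : Fin p, ∑ uv : Bool × Bool, ∑ rs : Bool × Bool,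
            (if k < l then
              |popCov P (gprod Xi Xj uv.1 uv.2 k) (gprod Xi Xj rs.1 rs.2 l)| else 0) :=
          Finset.sum_le_sum fun k _ => Finset.sum_le_sum fun l _ => step1 k l
      _ = ∑ uv : Bool × Bool, ∑ rs : Bool × Bool, ∑ k : Fin p, ∑ l : Fin p,
            (if k < l then
              |popCov P (gprod Xi Xj uv.1 uv.2 k) (gprod Xi Xj rs.1 rs.2 l)| else 0) :=
          sum_swap4 _
      _ ≤ ∑ _uv : Bool × Bool, ∑ _rs : Bool × Bool, Delta P p Xi Xj :=
          Finset.sum_le_sum fun uv _ => Finset.sum_le_sum fun rs _ =>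
            hDle uv.1 uv.2 rs.1 rs.2
      _ = 16 * Delta P p Xi Xj := by
          simp [Finset.sum_const, Finset.card_univ]
          ring
  -- assemble the double sum bound
  have hsplit : ∀ k l : Fin p,
      popCov P (fun ω => (Xi ω k - Xj ω k) ^ 2) (fun ω => (Xi ω l - Xj ω l) ^ 2)
        ≤ (if k = l then 16 * C else 0)
          + (if k < l then
              |popCov P (fun ω => (Xi ω k - Xj ω k) ^ 2) (fun ω => (Xi ω l - Xj ω l) ^ 2)|
            else 0)
          + (if l < k then
              |popCov P (fun ω => (Xi ω k - Xj ω k) ^ 2) (fun ω => (Xi ω l - Xj ω l) ^ 2)|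
            else 0) := by
    intro k l
    rcases lt_trichotomy k l with h | h | h
    · simp only [if_pos h, if_neg h.ne, if_neg (not_lt.mpr h.le)]
      simpa using le_abs_self _
    · subst h
      simpa [lt_irrefl] using hdiag k
    · simp only [if_pos h, if_neg h.ne', if_neg (not_lt.mpr h.le)]
      simpa using le_abs_self _
  have hsum_le : (∑ k : Fin p, ∑ l : Fin p,
      popCov P (fun ω => (Xi ω k - Xj ω k) ^ 2) (fun ω => (Xi ω l - Xj ω l) ^ 2))
      ≤ 16 * C * (p : ℝ) + 32 * Delta P p Xi Xj := by
    have hstep := Finset.sum_le_sum (s := Finset.univ)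
      fun k (_ : k ∈ Finset.univ) => Finset.sum_le_sum (s := Finset.univ)
        fun l (_ : l ∈ Finset.univ) => hsplit k l
    refine hstep.trans ?_
    have hsplit2 : (∑ k : Fin p, ∑ l : Fin p,
        ((if k = l then 16 * C else 0)
          + (if k < l then
              |popCov P (fun ω => (Xi ω k - Xj ω k) ^ 2) (fun ω => (Xi ω l - Xj ω l) ^ 2)|
            else 0)
          + (if l < k then
              |popCov P (fun ω => (Xi ω k - Xj ω k) ^ 2) (fun ω => (Xi ω l - Xj ω l) ^ 2)|
            else 0)))
        = (∑ k : Fin p, ∑ l : Fin p, (if k = l then 16 * C else 0))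
          + (∑ k : Fin p, ∑ l : Fin p, (if k < l then
              |popCov P (fun ω => (Xi ω k - Xj ω k) ^ 2) (fun ω => (Xi ω l - Xj ω l) ^ 2)|
            else 0))
          + (∑ k : Fin p, ∑ l : Fin p, (if l < k then
              |popCov P (fun ω => (Xi ω k - Xj ω k) ^ 2) (fun ω => (Xi ω l - Xj ω l) ^ 2)|
            else 0)) := by
      simp [Finset.sum_add_distrib]
    rw [hsplit2]
    have hd1 : (∑ k : Fin p, ∑ l : Fin p, (if k = l then 16 * C else 0))
        = 16 * C * (p : ℝ) := by
      simp [Finset.sum_ite_eq, Finset.card_univ]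
      ring
    have hd3 : (∑ k : Fin p, ∑ l : Fin p, (if l < k then
          |popCov P (fun ω => (Xi ω k - Xj ω k) ^ 2) (fun ω => (Xi ω l - Xj ω l) ^ 2)|
        else 0))
        = (∑ k : Fin p, ∑ l : Fin p, (if k < l then
          |popCov P (fun ω => (Xi ω k - Xj ω k) ^ 2) (fun ω => (Xi ω l - Xj ω l) ^ 2)|
        else 0)) := by
      rw [Finset.sum_comm]
      refine Finset.sum_congr rfl fun a _ => Finset.sum_congr rfl fun b _ => ?_
      by_cases h : a < b
      · simp only [if_pos h]
        rw [popCov_comm]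
      · simp [if_neg h]
    rw [hd1, hd3]
    linarith [key2]
  -- conclude
  rw [hSvar, hsum]
  have hc2 : (0:ℝ) ≤ (-(1 / (p : ℝ))) * (-(1 / (p : ℝ))) := by
    rw [neg_mul_neg]; positivity
  calc ((-(1 / (p : ℝ))) * (-(1 / (p : ℝ)))) * (∑ k : Fin p, ∑ l : Fin p,
        popCov P (fun ω => (Xi ω k - Xj ω k) ^ 2) (fun ω => (Xi ω l - Xj ω l) ^ 2))
      ≤ ((-(1 / (p : ℝ))) * (-(1 / (p : ℝ)))) *
          (16 * C * (p : ℝ) + 32 * Delta P p Xi Xj) :=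
        mul_le_mul_of_nonneg_left hsum_le hc2
    _ = (16 * C * (p : ℝ) + 32 * Delta P p Xi Xj) / (p : ℝ) ^ 2 := by
        ring

/-- under uniformly bounded fourth moments,
`Var(S*_{ij}) ≤ (16Cp + 32Δ_{ij})/p²`; in particular, if `Δ_{ij} = o(p²)` then
`Var(S*_{ij}) → 0` as `p → ∞`. -/
theorem scaled_similarity_variance_bound {Ω : Type*} [MeasurableSpace Ω]
    (P : Measure Ω) [IsProbabilityMeasure P] (C : ℝ) (hC : 0 < C)
    (Xi Xj : (p : ℕ) → Ω → Fin p → ℝ)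
    (hmeas : ∀ p, ∀ k : Fin p,
      Measurable (fun ω => Xi p ω k) ∧ Measurable (fun ω => Xj p ω k))
    (hint : ∀ p, ∀ k : Fin p,
      Integrable (fun ω => (Xi p ω k) ^ 4) P ∧ Integrable (fun ω => (Xj p ω k) ^ 4) P)
    (hmom : ∀ p, ∀ k : Fin p,
      (∫ ω, (Xi p ω k) ^ 4 ∂P) ≤ C ∧ (∫ ω, (Xj p ω k) ^ 4 ∂P) ≤ C) :
    (∀ p : ℕ,
      variance (Sstar p (Xi p) (Xj p)) P ≤
        (16 * C * (p : ℝ) + 32 * Delta P p (Xi p) (Xj p)) / (p : ℝ) ^ 2) ∧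
    (Tendsto (fun p : ℕ => Delta P p (Xi p) (Xj p) / (p : ℝ) ^ 2) atTop (nhds 0) →
      Tendsto (fun p : ℕ => variance (Sstar p (Xi p) (Xj p)) P) atTop (nhds 0)) := by
  constructor
  · intro p
    exact main_bound P C hC.le p (Xi p) (Xj p) (hmeas p) (hint p) (hmom p)
  · intro hD
    have h1 : Tendsto (fun p : ℕ =>
        16 * C * (1 / (p : ℝ)) + 32 * (Delta P p (Xi p) (Xj p) / (p : ℝ) ^ 2))
        atTop (nhds 0) := by
      have := (tendsto_one_div_atTop_nhds_zero_nat.const_mul (16 * C)).add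
        (hD.const_mul 32)
      simpa using this
    have h2 : Tendsto (fun p : ℕ =>
        (16 * C * (p : ℝ) + 32 * Delta P p (Xi p) (Xj p)) / (p : ℝ) ^ 2)
        atTop (nhds 0) := by
      refine h1.congr' ?_
      filter_upwards [eventually_ge_atTop 1] with p hp
      have hp0 : (p : ℝ) ≠ 0 := Nat.cast_ne_zero.mpr (by omega)
      field_simp
    exact tendsto_of_tendsto_of_tendsto_of_le_of_le tendsto_const_nhds h2
      (fun p => variance_nonneg _ _)
      (fun p => main_bound P C hC.le p (Xi p) (Xj p) (hmeas p) (hint p) (hmom p))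
end
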